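/- arXiv:1802.00377 — 3 statements merged into one kernel-verified Lean document; each statement's English description precedes it below -/
import Mathlib

section
/- Let B ⊆ ℝⁿ be an open ball, T ⊆ B a relatively closed subset, and f : B → ℝ a continuous function such that f(x) = 0 for every x ∈ T, f is continuously differentiable on B ∖ T, and ∫_{B∖T} |Df| dx < ∞. Then for every index l ∈ {1,…,n} and every C¹ function ζ : ℝⁿ → ℝ with compact support contained in B, one has ∫_B f · ∂_l ζ dx = − ∫_{B∖T} (∂_l f) · ζ dx. In particular, the distributional l-th partial derivative of f on B is the L¹(B) function equal to ∂_l f on B ∖ T and to 0 on T. -/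
open MeasureTheory Metric Set

noncomputable section

abbrev En (n : ℕ) := EuclideanSpace ℝ (Fin n)

/-- The `i`-th partial derivative of `f`. -/
def pd {n : ℕ} (f : En n → ℝ) (i : Fin n) (x : En n) : ℝ :=
  fderiv ℝ f x (EuclideanSpace.single i 1)

/-- Smooth function, `0` on `[-1,1]`, `1` outside `(-2,2)`, values in `[0,1]`. -/
def psiAux (s : ℝ) : ℝ := Real.smoothTransition (s - 1) + Real.smoothTransition (-s - 1)

lemma psiAux_contDiff : ContDiff ℝ (⊤ : ℕ∞) psiAux := by
  have h1 : ContDiff ℝ (⊤ : ℕ∞) fun s : ℝ => s - 1 := contDiff_id.sub contDiff_const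
  have h2 : ContDiff ℝ (⊤ : ℕ∞) fun s : ℝ => -s - 1 := contDiff_id.neg.sub contDiff_const
  exact (Real.smoothTransition.contDiff.comp h1).add (Real.smoothTransition.contDiff.comp h2)

lemma psiAux_nonneg (s : ℝ) : 0 ≤ psiAux s :=
  add_nonneg (Real.smoothTransition.nonneg _) (Real.smoothTransition.nonneg _)

lemma psiAux_le_one (s : ℝ) : psiAux s ≤ 1 := by
  unfold psiAux
  rcases le_total s 0 with h | h
  · have h1 : Real.smoothTransition (s - 1) = 0 :=
      Real.smoothTransition.zero_of_nonpos (by linarith)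
    have := Real.smoothTransition.le_one (-s - 1)
    linarith
  · have h2 : Real.smoothTransition (-s - 1) = 0 :=
      Real.smoothTransition.zero_of_nonpos (by linarith)
    have := Real.smoothTransition.le_one (s - 1)
    linarith

lemma psiAux_eq_zero {s : ℝ} (h : |s| ≤ 1) : psiAux s = 0 := by
  rw [abs_le] at h
  unfold psiAux
  rw [Real.smoothTransition.zero_of_nonpos (by linarith),
    Real.smoothTransition.zero_of_nonpos (by linarith), add_zero]

lemma psiAux_eq_one {s : ℝ} (h : 2 ≤ s ∨ s ≤ -2) : psiAux s = 1 := by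
  unfold psiAux
  rcases h with h | h
  · rw [Real.smoothTransition.one_of_one_le (by linarith),
      Real.smoothTransition.zero_of_nonpos (by linarith), add_zero]
  · rw [Real.smoothTransition.zero_of_nonpos (by linarith),
      Real.smoothTransition.one_of_one_le (by linarith), zero_add]

lemma psiAux_eq_one_abs {s : ℝ} (h : 2 ≤ |s|) : psiAux s = 1 := by
  apply psiAux_eq_one
  rcases le_or_gt 0 s with hs | hs
  · left; rwa [abs_of_nonneg hs] at h
  · right; rw [abs_of_neg hs] at h; linarith

/-- `G t = ∫_0^t psiAux`. -/
def GAux (t : ℝ) : ℝ := ∫ s in (0:ℝ)..t, psiAux s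

lemma psiAux_continuous : Continuous psiAux := psiAux_contDiff.continuous

lemma GAux_hasDerivAt (t : ℝ) : HasDerivAt GAux (psiAux t) t := by
  exact intervalIntegral.integral_hasDerivAt_right
    (psiAux_continuous.intervalIntegrable _ _)
    (psiAux_continuous.stronglyMeasurableAtFilter _ _)
    psiAux_continuous.continuousAt

lemma GAux_continuous : Continuous GAux := by
  have : Differentiable ℝ GAux := fun t => (GAux_hasDerivAt t).differentiableAt
  exact this.continuous

lemma GAux_eq_zero {t : ℝ} (h : |t| ≤ 1) : GAux t = 0 := by
  unfold GAux
  rw [abs_le] at h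
  rw [intervalIntegral.integral_congr (g := fun _ => (0:ℝ)), intervalIntegral.integral_zero]
  intro s hs
  rw [Set.mem_uIcc] at hs
  refine psiAux_eq_zero (abs_le.mpr ?_)
  rcases hs with ⟨h1, h2⟩ | ⟨h1, h2⟩ <;> constructor <;> linarith

lemma abs_GAux_le (t : ℝ) : |GAux t| ≤ |t| := by
  have := intervalIntegral.norm_integral_le_of_norm_le_const (C := 1)
    (f := psiAux) (a := 0) (b := t) ?_
  · simpa [GAux, Real.norm_eq_abs] using this
  · intro x _
    rw [Real.norm_eq_abs, abs_le]
    exact ⟨by linarith [psiAux_nonneg x], psiAux_le_one x⟩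

lemma abs_GAux_sub_le (t : ℝ) : |GAux t - t| ≤ 2 := by
  have key : ∀ u : ℝ, |u| ≤ 2 → |GAux u - u| ≤ 2 := by
    intro u hu
    have h1 : GAux u - u = ∫ s in (0:ℝ)..u, (psiAux s - 1) := by
      rw [intervalIntegral.integral_sub (psiAux_continuous.intervalIntegrable _ _)
        (intervalIntegrable_const), intervalIntegral.integral_const]
      simp [GAux]
    rw [h1]
    have := intervalIntegral.norm_integral_le_of_norm_le_const (C := 1)
      (f := fun s => psiAux s - 1) (a := 0) (b := u) ?_
    · calc |∫ s in (0:ℝ)..u, (psiAux s - 1)| ≤ 1 * |u - 0| := this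
        _ ≤ 2 := by rw [one_mul, sub_zero]; exact hu
    · intro x _
      rw [Real.norm_eq_abs, abs_le]
      have := psiAux_le_one x
      have := psiAux_nonneg x
      constructor <;> linarith
  rcases le_or_gt (|t|) 2 with h | h
  · exact key t h
  · rcases le_or_gt 0 t with ht | ht
    · have ht2 : (2:ℝ) ≤ t := by rw [abs_of_nonneg ht] at h; linarith
      have hsplit : GAux t = GAux 2 + ∫ s in (2:ℝ)..t, psiAux s := by
        rw [GAux, GAux, intervalIntegral.integral_add_adjacent_intervals
          (psiAux_continuous.intervalIntegrable _ _) (psiAux_continuous.intervalIntegrable _ _)]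
      have htail : (∫ s in (2:ℝ)..t, psiAux s) = t - 2 := by
        rw [intervalIntegral.integral_congr (g := fun _ => (1:ℝ))]
        · simp
        · intro s hs
          rw [Set.uIcc_of_le ht2, Set.mem_Icc] at hs
          exact psiAux_eq_one (Or.inl hs.1)
      have heq : GAux t - t = GAux 2 - 2 := by rw [hsplit, htail]; ring
      rw [heq]
      exact key 2 (by norm_num)
    · have ht2 : t ≤ (-2:ℝ) := by rw [abs_of_neg ht] at h; linarith
      have hsplit : GAux t = GAux (-2) + ∫ s in (-2:ℝ)..t, psiAux s := by
        rw [GAux, GAux, intervalIntegral.integral_add_adjacent_intervals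
          (psiAux_continuous.intervalIntegrable _ _) (psiAux_continuous.intervalIntegrable _ _)]
      have htail : (∫ s in (-2:ℝ)..t, psiAux s) = t + 2 := by
        rw [intervalIntegral.integral_congr (g := fun _ => (1:ℝ))]
        · simp only [intervalIntegral.integral_const, smul_eq_mul, mul_one]; ring
        · intro s hs
          rw [Set.uIcc_of_ge ht2, Set.mem_Icc] at hs
          exact psiAux_eq_one (Or.inr hs.2)
      have heq : GAux t - t = GAux (-2) - (-2) := by rw [hsplit, htail]; ring
      rw [heq]
      exact key (-2) (by norm_num)

/-- On the zero level set of a differentiable function, the derivative vanishes a.e. -/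
lemma ae_fderiv_eq_zero_on_levelset {n : ℕ} (l : Fin n) {U : Set (En n)} (hU : IsOpen U)
    {f : En n → ℝ} (hf : DifferentiableOn ℝ f U)
    {s : Set (En n)} (hs : MeasurableSet s) (hsU : s ⊆ U) (hs0 : ∀ x ∈ s, f x = 0) :
    ∀ᵐ x ∂(volume.restrict s), fderiv ℝ f x = 0 := by
  set e : En n := EuclideanSpace.single l 1 with he
  have hene : e ≠ 0 := by
    intro h
    have : ‖e‖ = 1 := EuclideanSpace.norm_single l 1 |>.trans (by norm_num)
    rw [h, norm_zero] at this; norm_num at this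
  set F : En n → En n := fun x => f x • e with hF
  set F' : En n → (En n →L[ℝ] En n) := fun x => (fderiv ℝ f x).smulRight e with hF'
  have happrox : ApproximatesLinearOn F (0 : En n →L[ℝ] En n) s 0 := by
    intro x hx y hy
    simp [hF, hs0 x hx, hs0 y hy]
  have hder : ∀ x ∈ s, HasFDerivWithinAt F (F' x) s x := by
    intro x hx
    have hdx : DifferentiableAt ℝ f x := (hf x (hsU hx)).differentiableAt (hU.mem_nhds (hsU hx))
    exact (hdx.hasFDerivAt.smul_const e).hasFDerivWithinAt
  have := happrox.norm_fderiv_sub_le (μ := volume) hs F' hder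
  filter_upwards [this] with x hx
  have hF'x : F' x = 0 := by
    have : ‖F' x - 0‖₊ = 0 := le_antisymm hx zero_le
    rwa [sub_zero, nnnorm_eq_zero] at this
  ext v
  have := congrFun (congrArg DFunLike.coe hF'x) v
  simp only [hF', ContinuousLinearMap.smulRight_apply, ContinuousLinearMap.zero_apply] at this
  rcases smul_eq_zero.mp this with h | h
  · simpa using h
  · exact absurd h hene

set_option maxHeartbeats 2000000 in
/-- **Extension lemma for distributional derivatives** (Lemma D.1 of the paper).
If `f` is continuous on an open ball `B`, vanishes on a relatively closed subset `T ⊆ B`,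
is `C¹` on `B \ T` with `∫_{B \ T} |Df| < ∞`, then for every index `l` and every `C¹`
test function `ζ` compactly supported in `B` one has
`∫_B f ∂_l ζ = - ∫_{B \ T} (∂_l f) ζ`; in particular the distributional `l`-th partial
derivative of `f` on `B` is the `L¹(B)` function equal to `∂_l f` on `B \ T` and `0` on `T`. -/
theorem distributional_derivative_extension
    {n : ℕ} (c : En n) (r : ℝ) (hr : 0 < r)
    (B : Set (En n)) (hB : B = Metric.ball c r)
    (T : Set (En n)) (hTB : T ⊆ B) (hTrc : IsOpen (B \ T))
    (f : En n → ℝ)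
    (hfc : ContinuousOn f B)
    (hfT : ∀ x ∈ T, f x = 0)
    (hfC1 : ContDiffOn ℝ 1 f (B \ T))
    (hint : IntegrableOn (fun x => ‖fderiv ℝ f x‖) (B \ T) volume) :
    ∀ l : Fin n,
      IntegrableOn (Set.indicator Tᶜ (fun x => pd f l x)) B volume ∧
      ∀ ζ : En n → ℝ, ContDiff ℝ 1 ζ → HasCompactSupport ζ → tsupport ζ ⊆ B →
        (∫ x in B, f x * pd ζ l x) = - ∫ x in B \ T, pd f l x * ζ x ∧
        (∫ x in B, f x * pd ζ l x)
          = - ∫ x in B, Set.indicator Tᶜ (fun y => pd f l y) x * ζ x := by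
  intro l
  classical
  set e : En n := EuclideanSpace.single l 1 with he
  have hnorme : ‖e‖ = 1 := by
    rw [he, EuclideanSpace.norm_single]; norm_num
  have hBo : IsOpen B := hB ▸ isOpen_ball
  have hBm : MeasurableSet B := hBo.measurableSet
  have hBTm : MeasurableSet (B \ T) := hTrc.measurableSet
  have hTm : MeasurableSet (B ∩ T) := by
    have : B ∩ T = B \ (B \ T) := by
      ext x; simp only [mem_inter_iff, mem_diff, not_and, not_not]
      constructor
      · rintro ⟨h1, h2⟩; exact ⟨h1, fun _ => h2⟩
      · rintro ⟨h1, h2⟩; exact ⟨h1, h2 h1⟩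
    rw [this]; exact hBm.diff hBTm
  -- measurability and integrability of `pd f l` on `B \ T`
  have hpdm : Measurable (fun x => pd f l x) := by
    simpa [pd] using measurable_fderiv_apply_const ℝ f e
  have hpd_le : ∀ x, |pd f l x| ≤ ‖fderiv ℝ f x‖ := by
    intro x
    calc |pd f l x| = ‖fderiv ℝ f x e‖ := by rw [pd]; rfl
      _ ≤ ‖fderiv ℝ f x‖ * ‖e‖ := (fderiv ℝ f x).le_opNorm e
      _ = ‖fderiv ℝ f x‖ := by rw [hnorme, mul_one]
  have hint1 : IntegrableOn (fun x => pd f l x) (B \ T) volume := by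
    refine hint.mono' hpdm.aestronglyMeasurable ?_
    filter_upwards with x
    simpa [Real.norm_eq_abs] using hpd_le x
  -- Part 1 : integrability of the indicator extension on B
  have hgm : Measurable (Set.indicator Tᶜ (fun x => pd f l x)) := by
    apply hpdm.indicator
    have : Tᶜ = (B \ T) ∪ Bᶜ := by
      ext x; simp only [mem_compl_iff, mem_union, mem_diff]
      constructor
      · intro hx
        by_cases hxB : x ∈ B
        · exact Or.inl ⟨hxB, hx⟩
        · exact Or.inr hxB
      · rintro (⟨_, h⟩ | h)
        · exact h
        · exact fun hxT => h (hTB hxT)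
    rw [this]; exact hBTm.union hBm.compl
  have hg_int : IntegrableOn (Set.indicator Tᶜ (fun x => pd f l x)) B volume := by
    have h1 : IntegrableOn (Set.indicator Tᶜ (fun x => pd f l x)) (B \ T) volume := by
      apply hint1.congr_fun _ hBTm
      intro x hx
      exact (Set.indicator_of_mem (show x ∈ Tᶜ from hx.2) (fun x => pd f l x)).symm
    have h2 : IntegrableOn (Set.indicator Tᶜ (fun x => pd f l x)) (B ∩ T) volume := by
      apply (integrableOn_zero (s := B ∩ T)).congr_fun _ hTm
      intro x hx
      exact (Set.indicator_of_notMem (by simp [hx.2]) _).symm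
    exact (h1.union h2).mono_set (fun x hx => by
      by_cases hxT : x ∈ T
      · exact Or.inr ⟨hx, hxT⟩
      · exact Or.inl ⟨hx, hxT⟩)
  refine ⟨hg_int, ?_⟩
  intro ζ hζC1 hζcs hζsupp
  have hζcont : Continuous ζ := hζC1.continuous
  have hpdζcont : Continuous (fun x => pd ζ l x) := by
    have h1 : Continuous (fderiv ℝ ζ) := hζC1.continuous_fderiv one_ne_zero
    exact h1.clm_apply continuous_const
  have hpdζ_supp : ∀ x, x ∉ tsupport ζ → pd ζ l x = 0 := by
    intro x hx
    have h0 : fderiv ℝ ζ x = 0 := by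
      by_contra h
      exact hx (support_fderiv_subset ℝ (Function.mem_support.mpr h))
    simp [pd, h0]
  -- construction of the cutoff function χ
  obtain ⟨r', hr'0, hr'r, hKr'⟩ :
      ∃ r', 0 < r' ∧ r' < r ∧ tsupport ζ ⊆ closedBall c r' := by
    rcases (tsupport ζ).eq_empty_or_nonempty with hK | hK
    · exact ⟨r / 2, half_pos hr, half_lt_self hr, by rw [hK]; exact empty_subset _⟩
    · obtain ⟨z, hzK, hz⟩ := hζcs.exists_isMaxOn hK
        ((continuous_id.dist continuous_const).continuousOn)
      rw [isMaxOn_iff] at hz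
      refine ⟨max (dist z c) (r / 2), lt_max_of_lt_right (half_pos hr), ?_, ?_⟩
      · apply max_lt _ (half_lt_self hr)
        have : z ∈ B := hζsupp hzK
        rwa [hB, mem_ball] at this
      · intro y hy
        rw [mem_closedBall]
        exact le_max_of_le_left (hz y hy)
  set rIn : ℝ := (r' + r) / 2 with hrIn
  set rOut : ℝ := (rIn + r) / 2 with hrOut
  have hrIn0 : 0 < rIn := by rw [hrIn]; linarith
  have hrInOut : rIn < rOut := by rw [hrOut]; linarith [show rIn < r by rw [hrIn]; linarith]
  have hrOutr : rOut < r := by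
    have : rIn < r := by rw [hrIn]; linarith
    rw [hrOut]; linarith
  set bump : ContDiffBump c := ⟨rIn, rOut, hrIn0, hrInOut⟩ with hbump
  set χ : En n → ℝ := fun x => bump x with hχ
  have hχ1 : ∀ x ∈ ball c rIn, χ x = 1 := fun x hx =>
    bump.one_of_mem_closedBall (ball_subset_closedBall hx)
  have hKIn : tsupport ζ ⊆ ball c rIn :=
    hKr'.trans (closedBall_subset_ball (by rw [hrIn]; linarith))
  have hχtsupp : tsupport χ ⊆ B := by
    rw [hχ]
    rw [show tsupport (fun x => bump x) = tsupport (⇑bump) from rfl, bump.tsupport_eq, hB]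
    exact closedBall_subset_ball hrOutr
  have hχ_eq_one_nhds : ∀ x ∈ tsupport ζ, fderiv ℝ χ x = 0 ∧ χ x = 1 := by
    intro x hx
    have hball : ball c rIn ∈ nhds x := isOpen_ball.mem_nhds (hKIn hx)
    constructor
    · have heq : χ =ᶠ[nhds x] (fun _ => (1:ℝ)) := by
        filter_upwards [hball] with y hy using hχ1 y hy
      rw [heq.fderiv_eq, fderiv_fun_const]
      rfl
    · exact hχ1 x (hKIn hx)
  have hχcont : Continuous χ := bump.continuous
  have hχdiff : ∀ x, HasFDerivAt χ (fderiv ℝ χ x) x := by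
    intro x
    exact ((bump.contDiff (n := 1)).differentiable (by norm_num) x).hasFDerivAt
  -- the key identity for a fixed ε > 0
  have key : ∀ ε : ℝ, 0 < ε →
      (∫ x in B, (ε * GAux (f x / ε)) * pd ζ l x)
        = - ∫ x in B \ T, psiAux (f x / ε) * pd f l x * ζ x := by
    intro ε hε
    set Gε : ℝ → ℝ := fun v => ε * GAux (v / ε) with hGεdef
    have hGεderiv : ∀ v : ℝ, HasDerivAt Gε (psiAux (v / ε)) v := by
      intro v
      have h1 : HasDerivAt (fun v : ℝ => v / ε) (1 / ε) v := by
        simpa using (hasDerivAt_id v).div_const ε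
      have h2 : HasDerivAt (fun v => GAux (v / ε)) (psiAux (v / ε) * (1 / ε)) v :=
        by have h := (GAux_hasDerivAt (v / ε)).comp v h1; exact h
      have h3 := h2.const_mul ε
      have : ε * (psiAux (v / ε) * (1 / ε)) = psiAux (v / ε) := by
        field_simp
      rw [this] at h3
      exact h3
    have hGεzero : ∀ v : ℝ, |v| ≤ ε → Gε v = 0 := by
      intro v hv
      rw [hGεdef]
      simp only
      rw [GAux_eq_zero, mul_zero]
      rw [abs_div, abs_of_pos hε]
      exact (div_le_one hε).mpr hv
    set V : Set (En n) := B ∩ f ⁻¹' (Ioo (-ε) ε) with hV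
    have hVopen : IsOpen V := hfc.isOpen_inter_preimage hBo isOpen_Ioo
    have hTV : B ∩ T ⊆ V := by
      rintro x ⟨hxB, hxT⟩
      refine ⟨hxB, ?_⟩
      simp only [mem_preimage, mem_Ioo, hfT x hxT]
      exact ⟨by linarith, hε⟩
    have hGfV : ∀ x ∈ V, Gε (f x) = 0 := by
      rintro x ⟨_, hx⟩
      simp only [mem_preimage, mem_Ioo] at hx
      exact hGεzero _ (abs_le.mpr ⟨by linarith [hx.1], hx.2.le⟩)
    set u : En n → ℝ := fun x => χ x * Gε (f x) with hu
    set Du : En n → (En n →L[ℝ] ℝ) := fun x =>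
      if x ∈ B \ T then
        χ x • (psiAux (f x / ε) • fderiv ℝ f x) + Gε (f x) • fderiv ℝ χ x
      else 0 with hDu
    have hDupos : ∀ x, x ∈ B \ T → Du x
        = χ x • (psiAux (f x / ε) • fderiv ℝ f x) + Gε (f x) • fderiv ℝ χ x := by
      intro x hx
      rw [hDu]
      exact if_pos hx
    have hDuneg : ∀ x, x ∉ B \ T → Du x = 0 := by
      intro x hx
      rw [hDu]
      exact if_neg hx
    have hder : ∀ x, HasFDerivAt u (Du x) x := by
      intro x
      by_cases hx : x ∈ B \ T
      · have hfd : HasFDerivAt f (fderiv ℝ f x) x :=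
          (((hfC1.differentiableOn one_ne_zero) x hx).differentiableAt
            (hTrc.mem_nhds hx)).hasFDerivAt
        have hGf : HasFDerivAt (fun y => Gε (f y)) (psiAux (f x / ε) • fderiv ℝ f x) x :=
          (hGεderiv (f x)).comp_hasFDerivAt x hfd
        have hmul := (hχdiff x).mul hGf
        rw [hDupos x hx]
        exact hmul
      · have hx0 : ∃ W : Set (En n), IsOpen W ∧ x ∈ W ∧ ∀ y ∈ W, u y = 0 := by
          by_cases hxB : x ∈ B
          · have hxT : x ∈ T := by
              by_contra hxT
              exact hx ⟨hxB, hxT⟩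
            refine ⟨V, hVopen, hTV ⟨hxB, hxT⟩, fun y hy => ?_⟩
            rw [hu]
            simp only [hGfV y hy, mul_zero]
          · refine ⟨(tsupport χ)ᶜ, (isClosed_tsupport χ).isOpen_compl,
              fun h => hxB (hχtsupp h), fun y hy => ?_⟩
            rw [hu]
            simp only [image_eq_zero_of_notMem_tsupport hy, zero_mul]
        obtain ⟨W, hWo, hxW, hW0⟩ := hx0
        rw [hDuneg x hx]
        have hconst : HasFDerivAt (fun _ : En n => (0:ℝ)) (0 : En n →L[ℝ] ℝ) x :=
          hasFDerivAt_const (0:ℝ) x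
        apply hconst.congr_of_eventuallyEq
        filter_upwards [hWo.mem_nhds hxW] with y hy using hW0 y hy
    have hdiffu : Differentiable ℝ u := fun x => (hder x).differentiableAt
    have hfu : ∀ x, fderiv ℝ u x = Du x := fun x => (hder x).fderiv
    -- pointwise identities
    have hw1 : ∀ x, u x * fderiv ℝ ζ x e
        = B.indicator (fun y => Gε (f y) * fderiv ℝ ζ y e) x := by
      intro x
      by_cases hζx : x ∈ tsupport ζ
      · have hxB : x ∈ B := hζsupp hζx
        rw [indicator_of_mem hxB, hu]
        simp only [(hχ_eq_one_nhds x hζx).2, one_mul]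
      · have h0 : fderiv ℝ ζ x = 0 := by
          by_contra h
          exact hζx (support_fderiv_subset ℝ (Function.mem_support.mpr h))
        by_cases hxB : x ∈ B
        · rw [indicator_of_mem hxB, h0]
          simp
        · rw [indicator_of_notMem hxB, h0]
          simp
    have hw2 : ∀ x, fderiv ℝ u x e * ζ x
        = (B \ T).indicator (fun y => psiAux (f y / ε) * pd f l y * ζ y) x := by
      intro x
      rw [hfu x]
      by_cases hx : x ∈ B \ T
      · rw [hDupos x hx, indicator_of_mem hx]
        by_cases hζx : ζ x = 0
        · rw [hζx, mul_zero, mul_zero]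
        · have hζx' : x ∈ tsupport ζ := subset_closure (Function.mem_support.mpr hζx)
          obtain ⟨hd0, hc1⟩ := hχ_eq_one_nhds x hζx'
          rw [hd0, hc1]
          simp only [ContinuousLinearMap.add_apply, ContinuousLinearMap.coe_smul',
            Pi.smul_apply, ContinuousLinearMap.zero_apply, smul_eq_mul, mul_zero, add_zero,
            one_mul, pd, ← he]
      · rw [hDuneg x hx, indicator_of_notMem hx]
        simp
    -- integrability
    obtain ⟨Cζ, hCζ⟩ := hζcont.bounded_above_of_compact_support hζcs
    have hucont : Continuous u := hdiffu.continuous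
    have huCS : HasCompactSupport u := by
      have : HasCompactSupport χ := bump.hasCompactSupport
      exact this.mul_right
    have hI1 : Integrable (fun x => u x * fderiv ℝ ζ x e) volume :=
      (hucont.mul ((hζC1.continuous_fderiv one_ne_zero).clm_apply
        continuous_const)).integrable_of_hasCompactSupport huCS.mul_right
    have hI3 : Integrable (fun x => u x * ζ x) volume :=
      (hucont.mul hζcont).integrable_of_hasCompactSupport huCS.mul_right
    have hI2 : Integrable (fun x => fderiv ℝ u x e * ζ x) volume := by
      have hfun : (fun x => fderiv ℝ u x e * ζ x)
          = (B \ T).indicator (fun y => psiAux (f y / ε) * pd f l y * ζ y) := funext hw2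
      rw [hfun, integrable_indicator_iff hBTm]
      have hmeas : AEStronglyMeasurable (fun y => psiAux (f y / ε) * pd f l y * ζ y)
          (volume.restrict (B \ T)) := by
        have hfm : AEStronglyMeasurable f (volume.restrict (B \ T)) :=
          (hfC1.continuousOn).aestronglyMeasurable hBTm
        exact (((psiAux_continuous.comp (continuous_id.div_const ε)).comp_aestronglyMeasurable
          hfm).mul hpdm.aestronglyMeasurable).mul hζcont.aestronglyMeasurable
      refine (hint.mul_const Cζ).mono' hmeas ?_
      filter_upwards with x
      simp only [Real.norm_eq_abs, abs_mul]
      have h1 : |psiAux (f x / ε)| ≤ 1 := by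
        rw [abs_of_nonneg (psiAux_nonneg _)]
        exact psiAux_le_one _
      have h2 : |pd f l x| ≤ ‖fderiv ℝ f x‖ := hpd_le x
      have h3 : |ζ x| ≤ Cζ := by
        have := hCζ x
        rwa [Real.norm_eq_abs] at this
      have h4 : (0:ℝ) ≤ Cζ := le_trans (abs_nonneg _) h3
      calc |psiAux (f x / ε)| * |pd f l x| * |ζ x|
          ≤ 1 * ‖fderiv ℝ f x‖ * Cζ := by
            apply mul_le_mul (mul_le_mul h1 h2 (abs_nonneg _) zero_le_one) h3 (abs_nonneg _)
            positivity
        _ = ‖fderiv ℝ f x‖ * Cζ := by ring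
    have hζdiff : Differentiable ℝ ζ := hζC1.differentiable one_ne_zero
    have hibp := integral_mul_fderiv_eq_neg_fderiv_mul_of_integrable hI2 hI1 hI3 (fun x _ => hdiffu x) (fun x _ => hζdiff x)
    -- rewrite both sides
    have hL : (∫ x, u x * fderiv ℝ ζ x e) = ∫ x in B, (ε * GAux (f x / ε)) * pd ζ l x := by
      rw [show (fun x => u x * fderiv ℝ ζ x e)
          = B.indicator (fun y => Gε (f y) * fderiv ℝ ζ y e) from funext hw1]
      rw [integral_indicator hBm]
      rfl
    have hR : (∫ x, fderiv ℝ u x e * ζ x)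
        = ∫ x in B \ T, psiAux (f x / ε) * pd f l x * ζ x := by
      rw [show (fun x => fderiv ℝ u x e * ζ x)
          = (B \ T).indicator (fun y => psiAux (f y / ε) * pd f l y * ζ y) from funext hw2]
      rw [integral_indicator hBTm]
    rw [← hL, ← hR]
    exact hibp
  -- the sequence of truncation parameters
  set εs : ℕ → ℝ := fun k => ((k : ℝ) + 1)⁻¹ with hεs
  have hεspos : ∀ k, 0 < εs k := fun k => by positivity
  have hεs0 : Filter.Tendsto εs Filter.atTop (nhds 0) := by
    rw [hεs]
    simpa only [one_div] using tendsto_one_div_add_atTop_nhds_zero_nat (𝕜 := ℝ)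
  -- limit of the left-hand sides
  have hfm : AEStronglyMeasurable f (volume.restrict B) := hfc.aestronglyMeasurable hBm
  have hbound1 : IntegrableOn (fun x => |f x| * |pd ζ l x|) B volume := by
    have hKm : MeasurableSet (tsupport ζ) := (isClosed_tsupport ζ).measurableSet
    have hcK : IntegrableOn (fun x => |f x| * |pd ζ l x|) (tsupport ζ) volume := by
      apply ContinuousOn.integrableOn_compact hζcs
      exact ((hfc.mono hζsupp).abs).mul (hpdζcont.continuousOn.abs)
    have hrest : IntegrableOn (fun x => |f x| * |pd ζ l x|) (B \ tsupport ζ) volume := by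
      apply (integrableOn_zero (s := B \ tsupport ζ)).congr_fun _ (hBm.diff hKm)
      intro x hx
      show (0:ℝ) = |f x| * |pd ζ l x|
      rw [hpdζ_supp x hx.2, abs_zero, mul_zero]
    exact (hcK.union hrest).mono_set (fun x hx => by
      by_cases h : x ∈ tsupport ζ
      · exact Or.inl h
      · exact Or.inr ⟨hx, h⟩)
  have hL1 : Filter.Tendsto (fun k => ∫ x in B, (εs k * GAux (f x / εs k)) * pd ζ l x)
      Filter.atTop (nhds (∫ x in B, f x * pd ζ l x)) := by
    apply tendsto_integral_of_dominated_convergence (fun x => |f x| * |pd ζ l x|)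
    · intro k
      exact ((continuous_const.mul
        (GAux_continuous.comp (continuous_id.div_const _))).comp_aestronglyMeasurable
          hfm).mul hpdζcont.aestronglyMeasurable
    · exact hbound1
    · intro k
      filter_upwards with x
      rw [Real.norm_eq_abs, abs_mul]
      apply mul_le_mul_of_nonneg_right _ (abs_nonneg _)
      have h := abs_GAux_le (f x / εs k)
      calc |εs k * GAux (f x / εs k)| = εs k * |GAux (f x / εs k)| := by
            rw [abs_mul, abs_of_pos (hεspos k)]
        _ ≤ εs k * |f x / εs k| := mul_le_mul_of_nonneg_left h (hεspos k).le
        _ = |f x| := by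
            rw [abs_div, abs_of_pos (hεspos k)]
            field_simp [(hεspos k).ne']
    · filter_upwards with x
      apply Filter.Tendsto.mul_const
      rw [tendsto_iff_dist_tendsto_zero]
      have hdist : ∀ k, dist (εs k * GAux (f x / εs k)) (f x) ≤ 2 * εs k := by
        intro k
        rw [Real.dist_eq]
        have h := abs_GAux_sub_le (f x / εs k)
        have heq : εs k * GAux (f x / εs k) - f x
            = εs k * (GAux (f x / εs k) - f x / εs k) := by
          rw [mul_sub]
          congr 1
          field_simp [(hεspos k).ne']
        rw [heq, abs_mul, abs_of_pos (hεspos k)]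
        calc εs k * |GAux (f x / εs k) - f x / εs k|
            ≤ εs k * 2 := mul_le_mul_of_nonneg_left h (hεspos k).le
          _ = 2 * εs k := mul_comm _ _
      apply squeeze_zero (fun k => dist_nonneg) hdist
      simpa using hεs0.const_mul 2
  -- a.e. vanishing of the derivative on the zero set of f inside B \ T
  have hae : ∀ᵐ x ∂(volume.restrict (B \ T)), f x = 0 → fderiv ℝ f x = 0 := by
    have hsO : IsOpen ((B \ T) ∩ f ⁻¹' ({0}ᶜ : Set ℝ)) :=
      (hfC1.continuousOn).isOpen_inter_preimage hTrc isOpen_compl_singleton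
    set s : Set (En n) := (B \ T) \ ((B \ T) ∩ f ⁻¹' ({0}ᶜ : Set ℝ)) with hs
    have hsm : MeasurableSet s := hBTm.diff hsO.measurableSet
    have hsub : s ⊆ B \ T := diff_subset
    have hs0 : ∀ x ∈ s, f x = 0 := by
      rintro x ⟨hx1, hx2⟩
      by_contra h
      exact hx2 ⟨hx1, h⟩
    have h0 := ae_fderiv_eq_zero_on_levelset l hTrc (hfC1.differentiableOn one_ne_zero)
      hsm hsub hs0
    rw [ae_iff] at h0 ⊢
    rw [Measure.restrict_apply' hBTm]
    rw [Measure.restrict_apply' hsm] at h0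
    have hseteq : {x | ¬(f x = 0 → fderiv ℝ f x = 0)} ∩ (B \ T)
        = {x | ¬fderiv ℝ f x = 0} ∩ s := by
      ext x
      simp only [mem_inter_iff, mem_setOf_eq, hs, mem_diff, mem_inter_iff, mem_preimage,
        mem_compl_iff, mem_singleton_iff, Classical.not_imp]
      tauto
    rw [hseteq]
    exact h0
  obtain ⟨Cζ, hCζ⟩ := hζcont.bounded_above_of_compact_support hζcs
  have hL2 : Filter.Tendsto (fun k => ∫ x in B \ T, psiAux (f x / εs k) * pd f l x * ζ x)
      Filter.atTop (nhds (∫ x in B \ T, pd f l x * ζ x)) := by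
    apply tendsto_integral_of_dominated_convergence (fun x => ‖fderiv ℝ f x‖ * Cζ)
    · intro k
      have hfm' : AEStronglyMeasurable f (volume.restrict (B \ T)) :=
        (hfC1.continuousOn).aestronglyMeasurable hBTm
      exact (((psiAux_continuous.comp (continuous_id.div_const _)).comp_aestronglyMeasurable
        hfm').mul hpdm.aestronglyMeasurable).mul hζcont.aestronglyMeasurable
    · exact hint.mul_const Cζ
    · intro k
      filter_upwards with x
      simp only [Real.norm_eq_abs, abs_mul]
      have h1 : |psiAux (f x / εs k)| ≤ 1 := by
        rw [abs_of_nonneg (psiAux_nonneg _)]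
        exact psiAux_le_one _
      have h2 : |pd f l x| ≤ ‖fderiv ℝ f x‖ := hpd_le x
      have h3 : |ζ x| ≤ Cζ := by
        have := hCζ x
        rwa [Real.norm_eq_abs] at this
      calc |psiAux (f x / εs k)| * |pd f l x| * |ζ x|
          ≤ 1 * ‖fderiv ℝ f x‖ * Cζ := by
            apply mul_le_mul (mul_le_mul h1 h2 (abs_nonneg _) zero_le_one) h3 (abs_nonneg _)
            positivity
        _ = ‖fderiv ℝ f x‖ * Cζ := by ring
    · filter_upwards [hae] with x hx
      by_cases hfx : f x = 0
      · have hpd0 : pd f l x = 0 := by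
          rw [pd, hx hfx]
          rfl
        simp only [hpd0, mul_zero, zero_mul]
        exact tendsto_const_nhds
      · apply Filter.Tendsto.congr' _ tendsto_const_nhds
        obtain ⟨N, hN⟩ := exists_nat_ge (2 / |f x|)
        have hfx0 : 0 < |f x| := abs_pos.mpr hfx
        filter_upwards [Filter.eventually_ge_atTop N] with k hk
        have hk1 : 2 / |f x| ≤ (k : ℝ) + 1 := by
          have h1 : (N : ℝ) ≤ (k : ℝ) := Nat.cast_le.mpr hk
          linarith
        have h2 : 2 ≤ |f x / εs k| := by
          have : f x / εs k = f x * ((k : ℝ) + 1) := by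
            rw [hεs]
            simp only [div_inv_eq_mul]
          rw [this, abs_mul, abs_of_pos (show (0:ℝ) < (k:ℝ) + 1 by positivity)]
          calc (2:ℝ) = (2 / |f x|) * |f x| := by field_simp
            _ ≤ ((k:ℝ) + 1) * |f x| := by
                apply mul_le_mul_of_nonneg_right hk1 (abs_nonneg _)
            _ = |f x| * ((k:ℝ) + 1) := mul_comm _ _
        rw [psiAux_eq_one_abs h2, one_mul]
  -- combine
  have hcomb : ∀ k, (∫ x in B, (εs k * GAux (f x / εs k)) * pd ζ l x)
      = - ∫ x in B \ T, psiAux (f x / εs k) * pd f l x * ζ x :=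
    fun k => key (εs k) (hεspos k)
  have hL1' : Filter.Tendsto (fun k => - ∫ x in B \ T, psiAux (f x / εs k) * pd f l x * ζ x)
      Filter.atTop (nhds (∫ x in B, f x * pd ζ l x)) := by
    apply hL1.congr
    intro k
    exact hcomb k
  have h1 : (∫ x in B, f x * pd ζ l x) = - ∫ x in B \ T, pd f l x * ζ x :=
    (tendsto_nhds_unique hL1' hL2.neg)
  refine ⟨h1, ?_⟩
  rw [h1]
  congr 1
  rw [← integral_indicator hBTm, ← integral_indicator hBm]
  congr 1
  funext x
  by_cases hx1 : x ∈ B \ T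
  · rw [indicator_of_mem hx1, indicator_of_mem hx1.1]
    rw [indicator_of_mem (show x ∈ Tᶜ from hx1.2)]
  · rw [indicator_of_notMem hx1]
    by_cases hxB : x ∈ B
    · have hxT : x ∈ T := by
        by_contra h
        exact hx1 ⟨hxB, h⟩
      rw [indicator_of_mem hxB, indicator_of_notMem (show x ∉ Tᶜ by simp [hxT])]
      rw [zero_mul]
    · rw [indicator_of_notMem hxB]

end
end

section
/- Let Ω ⊆ ℝⁿ be open, H ∈ ℝ, and let u₁, u₂ be C¹ functions on Ω satisfying weakly ∫_Ω F(Du₁)·Dζ dx = H ∫_Ω ζ dx and ∫_Ω F(Du₂)·Dζ dx = −H ∫_Ω ζ dx for every C¹ function ζ with compact support in Ω, where F(p) = p/√(1+|p|²). Define u_a := (u₁+u₂)/2, v := (u₂−u₁)/2, and for p, q ∈ ℝⁿ set a_{ij}(p,q) := ∫₀¹ (∂F_i/∂p_j)(p + (2t−1)q) dt and b_{ij}(p,q) := a_{ij}(p,q) − δ_{ij}. Then: (i) for every C¹ function ζ with compact support in Ω, ∫_Ω Σ_{i,j} (δ_{ij} + b_{ij}(Du_a(x), Dv(x))) ∂_j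 v ∂_i ζ dx = −H ∫_Ω ζ dx; and (ii) there is a constant C = C(n) such that |b_{ij}(p,q)| ≤ C (|p|² + |q|²) for all p, q ∈ ℝⁿ and all i, j. -/
open MeasureTheory Metric Set

noncomputable section

/-- `|Du|²`, the squared length of the gradient of `u`. -/
def gradSq {n : ℕ} (u : En n → ℝ) (x : En n) : ℝ := ∑ i, pd u i x ^ 2

/-- The `i`-th component of `F(Du)` where `F(p) = p/√(1+|p|²)`. -/
def Fcomp {n : ℕ} (u : En n → ℝ) (i : Fin n) (x : En n) : ℝ :=
  pd u i x / Real.sqrt (1 + gradSq u x)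

/-- `|p|²` for `p ∈ ℝⁿ`. -/
def normSq {n : ℕ} (p : Fin n → ℝ) : ℝ := ∑ i, p i ^ 2

/-- The Jacobian `∂F_i/∂p_j` of `F(p) = p/√(1+|p|²)`. -/
def DF {n : ℕ} (i j : Fin n) (p : Fin n → ℝ) : ℝ :=
  (if i = j then (1:ℝ) else 0) / Real.sqrt (1 + normSq p)
    - p i * p j / (1 + normSq p) ^ (3/2 : ℝ)

/-- `a_{ij}(p,q) = ∫₀¹ (∂F_i/∂p_j)(p + (2t−1)q) dt`. -/
def aCoef {n : ℕ} (i j : Fin n) (p q : Fin n → ℝ) : ℝ :=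
  ∫ t in (0:ℝ)..1, DF i j fun k => p k + (2 * t - 1) * q k

/-- `b_{ij}(p,q) = a_{ij}(p,q) − δ_{ij}`. -/
def bCoef {n : ℕ} (i j : Fin n) (p q : Fin n → ℝ) : ℝ :=
  aCoef i j p q - if i = j then 1 else 0

/-- The average of the two sheets. -/
def uavg {n : ℕ} (u₁ u₂ : En n → ℝ) : En n → ℝ := fun x => (u₁ x + u₂ x) / 2

/-- The semi-difference of the two sheets. -/
def usd {n : ℕ} (u₁ u₂ : En n → ℝ) : En n → ℝ := fun x => (u₂ x - u₁ x) / 2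


section AuxLemmas

variable {n : ℕ}

lemma normSq_nonneg (p : Fin n → ℝ) : 0 ≤ normSq p :=
  Finset.sum_nonneg fun _ _ => sq_nonneg _

lemma DF_sub_bound (r : Fin n → ℝ) (i j : Fin n) :
    |DF i j r - (if i = j then 1 else 0)| ≤ 2 * normSq r := by
  set s := normSq r with hs
  have hs0 : 0 ≤ s := normSq_nonneg r
  set T := Real.sqrt (1 + s) with hT
  have hT1 : 1 ≤ T := by
    rw [hT]
    nlinarith [Real.sq_sqrt (show (0:ℝ) ≤ 1 + s by linarith), Real.sqrt_nonneg (1 + s)]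
  have hTle : T ≤ 1 + s := by
    rw [hT, Real.sqrt_le_left (by linarith)]
    nlinarith
  have hT0 : (0:ℝ) < T := by linarith
  have hA : |1 / T - 1| ≤ s := by
    rw [abs_le]
    constructor
    · have hinv : 1 - s ≤ 1 / T := by
        rw [le_div_iff₀ hT0]
        nlinarith
      linarith
    · have : 1 / T ≤ 1 := by rw [div_le_one hT0]; exact hT1
      linarith
  have hE1 : (1:ℝ) ≤ (1 + s) ^ (3/2 : ℝ) :=
    Real.one_le_rpow (by linarith) (by norm_num)
  have hB : |r i * r j / (1 + s) ^ (3/2 : ℝ)| ≤ s := by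
    rw [abs_div, abs_of_pos (by linarith : (0:ℝ) < (1 + s) ^ (3/2 : ℝ))]
    have h1 : |r i * r j| ≤ s := by
      rw [abs_mul]
      have h2 : r i ^ 2 ≤ s := Finset.single_le_sum (fun k _ => sq_nonneg (r k)) (Finset.mem_univ i)
      have h3 : r j ^ 2 ≤ s := Finset.single_le_sum (fun k _ => sq_nonneg (r k)) (Finset.mem_univ j)
      nlinarith [sq_nonneg (|r i| - |r j|), sq_abs (r i), sq_abs (r j),
        abs_nonneg (r i), abs_nonneg (r j)]
    calc |r i * r j| / (1 + s) ^ (3/2 : ℝ) ≤ |r i * r j| / 1 :=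
          div_le_div_of_nonneg_left (abs_nonneg _) one_pos hE1
      _ ≤ s := by simpa using h1
  unfold DF
  by_cases hij : i = j
  · simp only [hij, if_true]
    calc |1 / T - r j * r j / (1 + s) ^ (3/2 : ℝ) - 1|
        ≤ |1 / T - 1| + |r j * r j / (1 + s) ^ (3/2 : ℝ)| := by
          rw [show (1 / T - r j * r j / (1 + s) ^ (3/2 : ℝ) - 1)
            = (1 / T - 1) - r j * r j / (1 + s) ^ (3/2 : ℝ) by ring]
          exact abs_sub _ _
      _ ≤ s + s := add_le_add hA (by simpa [hij] using hB)
      _ = 2 * s := by ring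
  · simp only [hij, if_false]
    calc |0 / T - r i * r j / (1 + s) ^ (3/2 : ℝ) - 0|
        = |r i * r j / (1 + s) ^ (3/2 : ℝ)| := by
          rw [zero_div, zero_sub, sub_zero, abs_neg]
      _ ≤ s := hB
      _ ≤ 2 * s := by linarith

lemma contDF (i j : Fin n) (p q : Fin n → ℝ) :
    Continuous fun t : ℝ => DF i j fun k => p k + (2 * t - 1) * q k := by
  have hr : ∀ k : Fin n, Continuous fun t : ℝ => p k + (2 * t - 1) * q k := fun k =>
    continuous_const.add
      (((continuous_const.mul continuous_id).sub continuous_const).mul continuous_const)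
  have hsc : Continuous fun t : ℝ => normSq fun k => p k + (2 * t - 1) * q k := by
    unfold normSq
    exact continuous_finset_sum _ fun k _ => (hr k).pow 2
  have hpos : ∀ t : ℝ, (0:ℝ) < 1 + normSq fun k => p k + (2 * t - 1) * q k := fun t => by
    have := normSq_nonneg fun k => p k + (2 * t - 1) * q k
    linarith
  unfold DF
  apply Continuous.sub
  · exact continuous_const.div ((continuous_const.add hsc).sqrt)
      (fun t => ne_of_gt (Real.sqrt_pos.mpr (hpos t)))
  · exact ((hr i).mul (hr j)).div ((continuous_const.add hsc).rpow_const
      (fun t => Or.inr (by norm_num))) (fun t => ne_of_gt (Real.rpow_pos_of_pos (hpos t) _))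

lemma bCoef_bound (p q : Fin n → ℝ) (i j : Fin n) :
    |bCoef i j p q| ≤ 4 * (normSq p + normSq q) := by
  have hint : IntervalIntegrable (fun t : ℝ => DF i j fun k => p k + (2 * t - 1) * q k)
      volume 0 1 := (contDF i j p q).intervalIntegrable 0 1
  have hb : bCoef i j p q
      = ∫ t in (0:ℝ)..1,
          (DF i j fun k => p k + (2 * t - 1) * q k) - (if i = j then 1 else 0) := by
    rw [intervalIntegral.integral_sub hint intervalIntegrable_const,
      intervalIntegral.integral_const]
    simp [bCoef, aCoef]
  rw [hb]
  have := intervalIntegral.norm_integral_le_of_norm_le_const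
    (C := 4 * (normSq p + normSq q))
    (f := fun t : ℝ => (DF i j fun k => p k + (2 * t - 1) * q k) - (if i = j then 1 else 0))
    (a := 0) (b := 1) ?_
  · simpa using this
  · intro t ht
    rw [Set.uIoc_of_le (by norm_num : (0:ℝ) ≤ 1)] at ht
    have hbd := DF_sub_bound (fun k => p k + (2 * t - 1) * q k) i j
    have hsle : (normSq fun k => p k + (2 * t - 1) * q k) ≤ 2 * (normSq p + normSq q) := by
      unfold normSq
      calc ∑ k, (fun k => p k + (2 * t - 1) * q k) k ^ 2
          ≤ ∑ k, 2 * (p k ^ 2 + q k ^ 2) := by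
            apply Finset.sum_le_sum
            intro k _
            have h1 : (2 * t - 1) ^ 2 ≤ 1 := by
              obtain ⟨h2, h3⟩ := ht
              nlinarith
            simp only []
            nlinarith [sq_nonneg (p k - (2 * t - 1) * q k), sq_nonneg (q k), sq_nonneg (p k)]
        _ = 2 * (∑ k, p k ^ 2 + ∑ k, q k ^ 2) := by
            rw [← Finset.mul_sum, Finset.sum_add_distrib]
    calc ‖(DF i j fun k => p k + (2 * t - 1) * q k) - (if i = j then 1 else 0)‖
        ≤ 2 * (normSq fun k => p k + (2 * t - 1) * q k) := hbd
      _ ≤ 4 * (normSq p + normSq q) := by linarith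

lemma rpow_three_half (x : ℝ) (hx : 0 < x) : x ^ (3/2 : ℝ) = Real.sqrt x ^ 3 := by
  rw [Real.sqrt_eq_rpow, ← Real.rpow_natCast (x ^ ((1:ℝ)/2)) 3, ← Real.rpow_mul hx.le]
  norm_num

lemma key_ftc (p q : Fin n → ℝ) (i : Fin n) :
    2 * ∑ j, aCoef i j p q * q j
      = (p i + q i) / Real.sqrt (1 + normSq fun k => p k + q k)
        - (p i - q i) / Real.sqrt (1 + normSq fun k => p k - q k) := by
  set r : ℝ → Fin n → ℝ := fun t k => p k + (2 * t - 1) * q k with hr_def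
  set s : ℝ → ℝ := fun t => normSq (r t) with hs_def
  set g : ℝ → ℝ := fun t => r t i / Real.sqrt (1 + s t) with hg_def
  set D : ℝ → ℝ := fun t => ∑ j, DF i j (r t) * (2 * q j) with hD_def
  have hpos : ∀ t, (0:ℝ) < 1 + s t := fun t => by
    have := normSq_nonneg (r t); rw [hs_def]; dsimp only; linarith
  have hTpos : ∀ t, (0:ℝ) < Real.sqrt (1 + s t) := fun t => Real.sqrt_pos.mpr (hpos t)
  have hderiv : ∀ t : ℝ, HasDerivAt g (D t) t := by
    intro t
    have hrk : ∀ k, HasDerivAt (fun t : ℝ => p k + (2 * t - 1) * q k) (2 * q k) t := by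
      intro k
      have h := ((((hasDerivAt_id t).const_mul 2).sub_const 1).mul_const (q k)).const_add (p k)
      simpa using h
    have hs' : HasDerivAt s (∑ k, (2:ℝ) * (r t k) ^ 1 * (2 * q k)) t := by
      rw [hs_def]
      simp only [normSq]
      exact HasDerivAt.fun_sum fun k _ => (hrk k).pow 2
    have hsqrt : HasDerivAt (fun t => Real.sqrt (1 + s t))
        (1 / (2 * Real.sqrt (1 + s t)) * (∑ k, (2:ℝ) * (r t k) ^ 1 * (2 * q k))) t := by
      have h1 : HasDerivAt (fun t => 1 + s t) (∑ k, (2:ℝ) * (r t k) ^ 1 * (2 * q k)) t :=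
        hs'.const_add 1
      exact (Real.hasDerivAt_sqrt (ne_of_gt (hpos t))).comp t h1
    have hgd : HasDerivAt g
        ((2 * q i * Real.sqrt (1 + s t)
          - r t i * (1 / (2 * Real.sqrt (1 + s t)) * (∑ k, (2:ℝ) * (r t k) ^ 1 * (2 * q k))))
          / Real.sqrt (1 + s t) ^ 2) t := (hrk i).div hsqrt (ne_of_gt (hTpos t))
    convert hgd using 1
    set T := Real.sqrt (1 + s t) with hT
    have hT0 : T ≠ 0 := ne_of_gt (hTpos t)
    have hE : (1 + normSq (r t)) ^ (3/2 : ℝ) = T ^ 3 := by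
      rw [hT, hs_def]; exact rpow_three_half _ (hpos t)
    have hS : (∑ k, (2:ℝ) * (r t k) ^ 1 * (2 * q k)) = 4 * ∑ k, r t k * q k := by
      rw [Finset.mul_sum]; exact Finset.sum_congr rfl fun k _ => by ring
    have hsum : D t = 2 * q i / T - 2 * r t i * (∑ j, r t j * q j) / T ^ 3 := by
      rw [hD_def]
      dsimp only
      have h1 : ∀ j, DF i j (r t) * (2 * q j)
          = (if i = j then 2 * q j / T else 0) - 2 * (r t i * (r t j * q j)) / T ^ 3 := by
        intro j
        unfold DF
        have hTT : Real.sqrt (1 + normSq (r t)) = T := by rw [hT, hs_def]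
        rw [hE, hTT]
        by_cases hij : i = j
        · simp only [hij, if_true]; ring
        · simp only [hij, if_false]; ring
      rw [Finset.sum_congr rfl fun j _ => h1 j, Finset.sum_sub_distrib,
        Finset.sum_ite_eq, if_pos (Finset.mem_univ i)]
      have h2 : ∑ j, 2 * (r t i * (r t j * q j)) / T ^ 3
          = 2 * r t i * (∑ j, r t j * q j) / T ^ 3 := by
        rw [← Finset.sum_div]
        congr 1
        rw [Finset.mul_sum]
        exact Finset.sum_congr rfl fun j _ => by ring
      rw [h2]
    rw [hsum, hS]
    field_simp
    ring
  have hDcont : Continuous D := by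
    rw [hD_def]
    exact continuous_finset_sum _ fun j _ => (contDF i j p q).mul continuous_const
  have hftc : ∫ t in (0:ℝ)..1, D t = g 1 - g 0 :=
    intervalIntegral.integral_eq_sub_of_hasDerivAt (fun t _ => hderiv t)
      (hDcont.intervalIntegrable 0 1)
  have hsplit : ∫ t in (0:ℝ)..1, D t = ∑ j, aCoef i j p q * (2 * q j) := by
    rw [hD_def]
    dsimp only
    rw [intervalIntegral.integral_finset_sum (f := fun j t => DF i j (r t) * (2 * q j))
      (fun j _ => ((contDF i j p q).mul continuous_const).intervalIntegrable 0 1)]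
    exact Finset.sum_congr rfl fun j _ => intervalIntegral.integral_mul_const _ _
  have hr1 : r 1 = fun k => p k + q k := by
    funext k; show p k + (2 * 1 - 1) * q k = p k + q k; ring
  have hr0 : r 0 = fun k => p k - q k := by
    funext k; show p k + (2 * 0 - 1) * q k = p k - q k; ring
  have hg1 : g 1 = (p i + q i) / Real.sqrt (1 + normSq fun k => p k + q k) := by
    show r 1 i / Real.sqrt (1 + normSq (r 1)) = _
    rw [hr1]
  have hg0 : g 0 = (p i - q i) / Real.sqrt (1 + normSq fun k => p k - q k) := by
    show r 0 i / Real.sqrt (1 + normSq (r 0)) = _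
    rw [hr0]
  rw [← hg1, ← hg0, ← hftc, hsplit, Finset.mul_sum]
  exact Finset.sum_congr rfl fun j _ => by ring

lemma gradSq_nonneg (u : En n → ℝ) (x : En n) : 0 ≤ gradSq u x :=
  Finset.sum_nonneg fun _ _ => sq_nonneg _

lemma Fcomp_bdd (u : En n → ℝ) (i : Fin n) (x : En n) : ‖Fcomp u i x‖ ≤ 1 := by
  have hg := gradSq_nonneg u x
  have hTpos : (0:ℝ) < Real.sqrt (1 + gradSq u x) := Real.sqrt_pos.mpr (by linarith)
  rw [Fcomp, Real.norm_eq_abs, abs_div, abs_of_pos hTpos, div_le_one hTpos]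
  apply Real.abs_le_sqrt
  have : pd u i x ^ 2 ≤ gradSq u x :=
    Finset.single_le_sum (fun j _ => sq_nonneg (pd u j x)) (Finset.mem_univ i)
  linarith

lemma Fcomp_meas (u : En n → ℝ) (i : Fin n) : Measurable (Fcomp u i) := by
  have h1 : Measurable (pd u i) := measurable_fderiv_apply_const ℝ u _
  have h2 : Measurable (gradSq u) :=
    Finset.measurable_sum _ fun j _ => (measurable_fderiv_apply_const ℝ u _).pow_const 2
  exact h1.div ((measurable_const.add h2).sqrt)

lemma pd_cont {ζ : En n → ℝ} (hζ : ContDiff ℝ 1 ζ) (i : Fin n) :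
    Continuous (pd ζ i) :=
  (hζ.continuous_fderiv one_ne_zero).clm_apply continuous_const

lemma pd_hcs {ζ : En n → ℝ} (hc : HasCompactSupport ζ) (i : Fin n) :
    HasCompactSupport (pd ζ i) :=
  HasCompactSupport.fderiv_apply (𝕜 := ℝ) hc _

lemma intOn (Ω : Set (En n)) (u ζ : En n → ℝ) (hζ : ContDiff ℝ 1 ζ)
    (hc : HasCompactSupport ζ) :
    IntegrableOn (fun x => ∑ i, Fcomp u i x * pd ζ i x) Ω := by
  apply Integrable.integrableOn
  apply integrable_finset_sum
  intro i _
  exact Integrable.bdd_mul ((pd_cont hζ i).integrable_of_hasCompactSupport (pd_hcs hc i))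
    (Fcomp_meas u i).aestronglyMeasurable (ae_of_all _ (Fcomp_bdd u i))

lemma pd_avg {u₁ u₂ : En n → ℝ} {x : En n}
    (hd1 : DifferentiableAt ℝ u₁ x) (hd2 : DifferentiableAt ℝ u₂ x) (k : Fin n) :
    pd (uavg u₁ u₂) k x = (pd u₁ k x + pd u₂ k x) / 2 := by
  have h : HasFDerivAt (uavg u₁ u₂)
      ((2:ℝ)⁻¹ • (fderiv ℝ u₁ x + fderiv ℝ u₂ x)) x := by
    have h1 := (hd1.hasFDerivAt.add hd2.hasFDerivAt).const_smul (2:ℝ)⁻¹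
    have e : uavg u₁ u₂ = (2:ℝ)⁻¹ • (u₁ + u₂) := by
      funext y
      simp [uavg, smul_eq_mul]
      ring
    rw [e]; exact h1
  rw [pd, h.fderiv]
  simp [ContinuousLinearMap.add_apply, pd]
  ring

lemma pd_sd {u₁ u₂ : En n → ℝ} {x : En n}
    (hd1 : DifferentiableAt ℝ u₁ x) (hd2 : DifferentiableAt ℝ u₂ x) (k : Fin n) :
    pd (usd u₁ u₂) k x = (pd u₂ k x - pd u₁ k x) / 2 := by
  have h : HasFDerivAt (usd u₁ u₂)
      ((2:ℝ)⁻¹ • (fderiv ℝ u₂ x - fderiv ℝ u₁ x)) x := by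
    have h1 := (hd2.hasFDerivAt.sub hd1.hasFDerivAt).const_smul (2:ℝ)⁻¹
    have e : usd u₁ u₂ = (2:ℝ)⁻¹ • (u₂ - u₁) := by
      funext y
      simp [usd, smul_eq_mul]
      ring
    rw [e]; exact h1
  rw [pd, h.fderiv]
  simp [ContinuousLinearMap.sub_apply, pd]
  ring

end AuxLemmas

/-- **Derivation of the uniformly elliptic divergence-form PDE for the semi-difference**
of two CMC graphs with opposite mean-curvature signs (equation (7.2) of the paper):
`v = (u₂−u₁)/2` satisfies `∫ Σ (δ_{ij} + b_{ij}(Du_a,Dv)) ∂_j v ∂_i ζ = −H ∫ ζ`, and the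
coefficients `b_{ij}` satisfy `|b_{ij}(p,q)| ≤ C (|p|² + |q|²)`. -/
theorem semidifference_pde_derivation
    {n : ℕ} (Ω : Set (En n)) (hΩ : IsOpen Ω) (H : ℝ)
    (u₁ u₂ : En n → ℝ)
    (h1 : ContDiffOn ℝ 1 u₁ Ω) (h2 : ContDiffOn ℝ 1 u₂ Ω)
    (hw1 : ∀ ζ : En n → ℝ, ContDiff ℝ 1 ζ → HasCompactSupport ζ → tsupport ζ ⊆ Ω →
      (∫ x in Ω, ∑ i, Fcomp u₁ i x * pd ζ i x) = H * ∫ x in Ω, ζ x)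
    (hw2 : ∀ ζ : En n → ℝ, ContDiff ℝ 1 ζ → HasCompactSupport ζ → tsupport ζ ⊆ Ω →
      (∫ x in Ω, ∑ i, Fcomp u₂ i x * pd ζ i x) = -(H * ∫ x in Ω, ζ x)) :
    (∀ ζ : En n → ℝ, ContDiff ℝ 1 ζ → HasCompactSupport ζ → tsupport ζ ⊆ Ω →
      (∫ x in Ω, ∑ i, ∑ j,
          ((if i = j then (1:ℝ) else 0)
              + bCoef i j (fun k => pd (uavg u₁ u₂) k x) (fun k => pd (usd u₁ u₂) k x))
            * pd (usd u₁ u₂) j x * pd ζ i x)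
        = -(H * ∫ x in Ω, ζ x)) ∧
    (∃ C : ℝ, 0 < C ∧ ∀ (p q : Fin n → ℝ) (i j : Fin n),
      |bCoef i j p q| ≤ C * (normSq p + normSq q)) := by
  constructor
  · intro ζ hζ hcs hsupp
    have hEq : Set.EqOn
        (fun x => ∑ i, ∑ j,
          ((if i = j then (1:ℝ) else 0)
              + bCoef i j (fun k => pd (uavg u₁ u₂) k x) (fun k => pd (usd u₁ u₂) k x))
            * pd (usd u₁ u₂) j x * pd ζ i x)
        (fun x => (∑ i, Fcomp u₂ i x * pd ζ i x) / 2
          - (∑ i, Fcomp u₁ i x * pd ζ i x) / 2) Ω := by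
      intro x hx
      have hd1 : DifferentiableAt ℝ u₁ x :=
        (h1.contDiffAt (hΩ.mem_nhds hx)).differentiableAt one_ne_zero
      have hd2 : DifferentiableAt ℝ u₂ x :=
        (h2.contDiffAt (hΩ.mem_nhds hx)).differentiableAt one_ne_zero
      dsimp only
      set p : Fin n → ℝ := fun k => pd (uavg u₁ u₂) k x with hp
      set q : Fin n → ℝ := fun k => pd (usd u₁ u₂) k x with hq
      have hpq : ∀ k, p k + q k = pd u₂ k x := fun k => by
        rw [hp, hq]; dsimp only; rw [pd_avg hd1 hd2 k, pd_sd hd1 hd2 k]; ring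
      have hpm : ∀ k, p k - q k = pd u₁ k x := fun k => by
        rw [hp, hq]; dsimp only; rw [pd_avg hd1 hd2 k, pd_sd hd1 hd2 k]; ring
      have hkey : ∀ i, ∑ j, aCoef i j p q * q j = (Fcomp u₂ i x - Fcomp u₁ i x) / 2 := by
        intro i
        have h := key_ftc p q i
        rw [hpq i, hpm i, funext hpq, funext hpm] at h
        have h2' : (pd u₂ i x / Real.sqrt (1 + normSq fun k => pd u₂ k x))
            = Fcomp u₂ i x := rfl
        have h1' : (pd u₁ i x / Real.sqrt (1 + normSq fun k => pd u₁ k x))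
            = Fcomp u₁ i x := rfl
        rw [h2', h1'] at h
        linarith
      calc ∑ i, ∑ j, ((if i = j then (1:ℝ) else 0) + bCoef i j p q)
              * pd (usd u₁ u₂) j x * pd ζ i x
          = ∑ i, (∑ j, aCoef i j p q * q j) * pd ζ i x := by
            apply Finset.sum_congr rfl
            intro i _
            rw [Finset.sum_mul]
            apply Finset.sum_congr rfl
            intro j _
            have hab : (if i = j then (1:ℝ) else 0) + bCoef i j p q = aCoef i j p q := by
              rw [bCoef]; ring
            rw [hab]
        _ = ∑ i, (Fcomp u₂ i x - Fcomp u₁ i x) / 2 * pd ζ i x :=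
            Finset.sum_congr rfl fun i _ => by rw [hkey i]
        _ = (∑ i, Fcomp u₂ i x * pd ζ i x) / 2
            - (∑ i, Fcomp u₁ i x * pd ζ i x) / 2 := by
            have hterm : ∀ i : Fin n, (Fcomp u₂ i x - Fcomp u₁ i x) / 2 * pd ζ i x
                = Fcomp u₂ i x * pd ζ i x / 2 - Fcomp u₁ i x * pd ζ i x / 2 := fun i => by ring
            rw [Finset.sum_congr rfl fun i _ => hterm i, Finset.sum_sub_distrib,
              ← Finset.sum_div, ← Finset.sum_div]
    rw [setIntegral_congr_fun hΩ.measurableSet hEq,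
      integral_sub ((intOn Ω u₂ ζ hζ hcs).div_const 2) ((intOn Ω u₁ ζ hζ hcs).div_const 2),
      integral_div, integral_div, hw1 ζ hζ hcs hsupp, hw2 ζ hζ hcs hsupp]
    ring
  · exact ⟨4, by norm_num, fun p q i j => bCoef_bound p q i j⟩
end
end

section
/- Let Ω ⊆ ℝⁿ be open, h > 0, and u₁, u₂ ∈ C²(Ω) with u₁ ≤ u₂ on Ω, satisfying pointwise div(F(Du₁)) = −h and div(F(Du₂)) = h on Ω, where F(p) = p/√(1+|p|²). Suppose u₁(x₀) = u₂(x₀) for some x₀ ∈ Ω. Then: (i) Du₁(x₀) = Du₂(x₀); (ii) the Hessian D²(u₂−u₁)(x₀) is positive semidefinite and nonzero, and there exists i ∈ {1,…,n} with ∂²_{ii}(u₂−u₁)(x₀) > 0; (iii) consequently there exist an index i and an open neighborhood U of x₀ such that ∂²_{ii}(u₂−u₁) > 0 on U, the contact set {x ∈ U : u₁(x) = u₂(x)} is contained in {x ∈ U : ∂_i(u₂−u₁)(x) = 0}, and {x ∈ U : u₁(x) = u₂(x)} has Lebesgue measure zero. -/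
open MeasureTheory Metric Set

noncomputable section

/-- The second partial derivative `∂_i ∂_j f`. -/
def pd2 {n : ℕ} (f : En n → ℝ) (i j : Fin n) (x : En n) : ℝ :=
  fderiv ℝ (fun y => pd f j y) x (EuclideanSpace.single i 1)

/-- The mean curvature operator `div (F(Du))`. -/
def divF {n : ℕ} (u : En n → ℝ) (x : En n) : ℝ :=
  ∑ i, fderiv ℝ (Fcomp u i) x (EuclideanSpace.single i 1)

/-! ### Auxiliary lemmas -/

open Filter

/-- The one-dimensional second derivative test at a local minimum. -/
lemma second_deriv_test {g : ℝ → ℝ} (hmin : IsLocalMin g 0) {c : ℝ}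
    (hg : ∀ᶠ t in nhds 0, DifferentiableAt ℝ g t)
    (hg'' : HasDerivAt (deriv g) c 0) : 0 ≤ c := by
  by_contra hc
  push_neg at hc
  have h0 : deriv g 0 = 0 := hmin.deriv_eq_zero
  have hslope : Tendsto (fun t => deriv g t / t) (nhdsWithin 0 (Ioi 0)) (nhds c) := by
    have h1 := hasDerivAt_iff_tendsto_slope.1 hg''
    have h2 := h1.mono_left (nhdsWithin_mono 0 (fun t (ht : t ∈ Ioi 0) => ne_of_gt ht))
    refine h2.congr' ?_
    filter_upwards [self_mem_nhdsWithin] with t ht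
    simp [slope, h0, div_eq_inv_mul]
  have hneg : ∀ᶠ t in nhdsWithin 0 (Ioi 0), deriv g t / t < 0 :=
    hslope.eventually_lt_const hc
  have hneg' : ∀ᶠ t in nhdsWithin 0 (Ioi 0), deriv g t < 0 := by
    filter_upwards [hneg, self_mem_nhdsWithin] with t h1 (h2 : 0 < t)
    by_contra hge
    push_neg at hge
    exact absurd (div_nonneg hge h2.le) (not_le.2 h1)
  obtain ⟨δ₁, hδ₁mem, hH⟩ := mem_nhdsGT_iff_exists_Ioc_subset.mp hneg'
  have hδ₁ : 0 < δ₁ := hδ₁mem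
  obtain ⟨δ₂, hδ₂, hD⟩ := Metric.eventually_nhds_iff_ball.mp hg
  obtain ⟨δ₃, hδ₃, hM⟩ := Metric.eventually_nhds_iff_ball.mp (hmin : ∀ᶠ x in nhds 0, g 0 ≤ g x)
  set δ := min δ₁ (min δ₂ δ₃ / 2) with hδdef
  have hδpos : 0 < δ := lt_min hδ₁ (by positivity)
  have hIcc : Icc (0:ℝ) δ ⊆ ball 0 δ₂ := by
    intro t ht
    simp only [mem_ball, Real.dist_eq, abs_sub_comm, sub_zero]
    rw [abs_of_nonneg ht.1]
    calc t ≤ δ := ht.2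
    _ ≤ min δ₂ δ₃ / 2 := min_le_right _ _
    _ < min δ₂ δ₃ := by have := lt_min hδ₂ hδ₃; linarith [min_le_left δ₂ δ₃]
    _ ≤ δ₂ := min_le_left _ _
  have hanti : StrictAntiOn g (Icc 0 δ) := by
    apply strictAntiOn_of_deriv_neg (convex_Icc _ _)
    · exact fun t ht => (hD t (hIcc ht)).continuousAt.continuousWithinAt
    · intro t ht
      rw [interior_Icc] at ht
      exact hH ⟨ht.1, le_trans ht.2.le (min_le_left _ _)⟩
  have hlt : g δ < g 0 := hanti (left_mem_Icc.2 hδpos.le) (right_mem_Icc.2 hδpos.le) hδpos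
  have hge : g 0 ≤ g δ := by
    apply hM
    simp only [mem_ball, Real.dist_eq, sub_zero]
    rw [abs_of_nonneg hδpos.le]
    calc δ ≤ min δ₂ δ₃ / 2 := min_le_right _ _
    _ < min δ₂ δ₃ := by have := lt_min hδ₂ hδ₃; linarith
    _ ≤ δ₃ := min_le_right _ _
  linarith

variable {n : ℕ}

lemma hasFDerivAt_pd (f : En n → ℝ) (j : Fin n) (x : En n)
    (hf : DifferentiableAt ℝ (fderiv ℝ f) x) :
    HasFDerivAt (pd f j)
      ((ContinuousLinearMap.apply ℝ ℝ (EuclideanSpace.single j 1)).comp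
        (fderiv ℝ (fderiv ℝ f) x)) x := by
  have h := ((ContinuousLinearMap.apply ℝ ℝ (EuclideanSpace.single j 1)).hasFDerivAt
    (x := fderiv ℝ f x)).comp x hf.hasFDerivAt
  exact h

lemma pd2_eq (f : En n → ℝ) (i j : Fin n) (x : En n)
    (hf : DifferentiableAt ℝ (fderiv ℝ f) x) :
    pd2 f i j x = fderiv ℝ (fderiv ℝ f) x (EuclideanSpace.single i 1)
      (EuclideanSpace.single j 1) := by
  have := (hasFDerivAt_pd f j x hf).fderiv
  simp only [pd2]
  rw [show (fun y => pd f j y) = pd f j from rfl, this]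
  rfl

lemma diff_fderiv {Ω : Set (En n)} (hΩ : IsOpen Ω) {f : En n → ℝ}
    (hf : ContDiffOn ℝ 2 f Ω) {x : En n} (hx : x ∈ Ω) :
    DifferentiableAt ℝ (fderiv ℝ f) x := by
  have h1 : ContDiffOn ℝ 1 (fderiv ℝ f) Ω := hf.fderiv_of_isOpen hΩ le_rfl
  exact (h1.differentiableOn one_ne_zero).differentiableAt (hΩ.mem_nhds hx)

lemma diff_at {Ω : Set (En n)} (hΩ : IsOpen Ω) {f : En n → ℝ}
    (hf : ContDiffOn ℝ 2 f Ω) {x : En n} (hx : x ∈ Ω) :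
    DifferentiableAt ℝ f x :=
  (hf.differentiableOn two_ne_zero).differentiableAt (hΩ.mem_nhds hx)

lemma cont_fderiv2 {Ω : Set (En n)} (hΩ : IsOpen Ω) {f : En n → ℝ}
    (hf : ContDiffOn ℝ 2 f Ω) :
    ContinuousOn (fun x => fderiv ℝ (fderiv ℝ f) x) Ω := by
  have h1 : ContDiffOn ℝ 1 (fderiv ℝ f) Ω := hf.fderiv_of_isOpen hΩ le_rfl
  exact h1.continuousOn_fderiv_of_isOpen hΩ le_rfl

/-- Expansion of the mean curvature operator in terms of the second derivative. -/
lemma divF_eq {Ω : Set (En n)} (hΩ : IsOpen Ω) {f : En n → ℝ}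
    (hf : ContDiffOn ℝ 2 f Ω) {x : En n} (hx : x ∈ Ω) :
    divF f x =
      (∑ i, fderiv ℝ (fderiv ℝ f) x (EuclideanSpace.single i 1) (EuclideanSpace.single i 1))
        / Real.sqrt (1 + gradSq f x)
      - (∑ i, ∑ j, pd f i x * pd f j x *
          fderiv ℝ (fderiv ℝ f) x (EuclideanSpace.single i 1) (EuclideanSpace.single j 1))
        / Real.sqrt (1 + gradSq f x) ^ 3 := by
  set B := fderiv ℝ (fderiv ℝ f) x with hB
  set s := Real.sqrt (1 + gradSq f x) with hsdef
  have hq : 0 ≤ gradSq f x := Finset.sum_nonneg fun i _ => sq_nonneg _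
  have h1q : (0:ℝ) < 1 + gradSq f x := by linarith
  have hs : 0 < s := Real.sqrt_pos.2 h1q
  have hs2 : s ^ 2 = 1 + gradSq f x := Real.sq_sqrt h1q.le
  have hBd : DifferentiableAt ℝ (fderiv ℝ f) x := diff_fderiv hΩ hf hx
  set L : Fin n → (En n →L[ℝ] ℝ) := fun j =>
    (ContinuousLinearMap.apply ℝ ℝ (EuclideanSpace.single j 1)).comp B with hL
  have hpdj : ∀ j, HasFDerivAt (pd f j) (L j) x := fun j => hasFDerivAt_pd f j x hBd
  set G : En n →L[ℝ] ℝ := ∑ j, (2 * pd f j x) • L j with hG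
  have hgrad : HasFDerivAt (gradSq f) G x := by
    have : HasFDerivAt (fun y => ∑ j, pd f j y ^ 2) (∑ j, (2 * pd f j x) • L j) x := by
      apply HasFDerivAt.fun_sum
      intro j _
      have hmul := (hpdj j).mul (hpdj j)
      have hfun : (fun y => pd f j y ^ 2) = fun y => pd f j y * pd f j y := by
        funext y; ring
      rw [hfun, two_mul, add_smul]
      exact hmul
    exact this
  have hsqrt : HasFDerivAt (fun y => Real.sqrt (1 + gradSq f y)) ((1 / (2 * s)) • G) x := by
    have h1 : HasFDerivAt (fun y => 1 + gradSq f y) G x := hgrad.const_add 1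
    exact h1.sqrt h1q.ne'
  have hinv : HasFDerivAt (fun y => (Real.sqrt (1 + gradSq f y))⁻¹)
      ((-(s ^ 2)⁻¹) • ((1 / (2 * s)) • G)) x := by
    have := (hasDerivAt_inv hs.ne').comp_hasFDerivAt x hsqrt
    exact this
  have hFi : ∀ i, HasFDerivAt (Fcomp f i)
      (pd f i x • ((-(s ^ 2)⁻¹) • ((1 / (2 * s)) • G)) + s⁻¹ • L i) x := by
    intro i
    have heq : Fcomp f i = fun y => pd f i y * (Real.sqrt (1 + gradSq f y))⁻¹ := by
      funext y; simp [Fcomp, div_eq_mul_inv]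
    rw [heq]
    exact (hpdj i).mul hinv
  have hval : ∀ i, fderiv ℝ (Fcomp f i) x (EuclideanSpace.single i 1) =
      pd f i x * ((-(s ^ 2)⁻¹) * ((1 / (2 * s)) * (∑ j, 2 * pd f j x *
        B (EuclideanSpace.single i 1) (EuclideanSpace.single j 1))))
      + s⁻¹ * B (EuclideanSpace.single i 1) (EuclideanSpace.single i 1) := by
    intro i
    rw [(hFi i).fderiv]
    simp [hG, ContinuousLinearMap.sum_apply, hL, mul_assoc]
  unfold divF
  rw [Finset.sum_congr rfl fun i _ => hval i, Finset.sum_add_distrib]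
  have key : ∀ i : Fin n, pd f i x * (-(s ^ 2)⁻¹ * (1 / (2 * s) *
        ∑ j, 2 * pd f j x * B (EuclideanSpace.single i 1) (EuclideanSpace.single j 1)))
      = -((∑ j, pd f i x * pd f j x *
            B (EuclideanSpace.single i 1) (EuclideanSpace.single j 1)) / s ^ 3) := by
    intro i
    have h2 : ∑ j, 2 * pd f j x * B (EuclideanSpace.single i 1) (EuclideanSpace.single j 1)
        = 2 * ∑ j, pd f j x * B (EuclideanSpace.single i 1) (EuclideanSpace.single j 1) := by
      rw [Finset.mul_sum]
      exact Finset.sum_congr rfl fun j _ => by ring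
    have h3 : ∑ j, pd f i x * pd f j x * B (EuclideanSpace.single i 1) (EuclideanSpace.single j 1)
        = pd f i x * ∑ j, pd f j x * B (EuclideanSpace.single i 1) (EuclideanSpace.single j 1) := by
      rw [Finset.mul_sum]
      exact Finset.sum_congr rfl fun j _ => by ring
    rw [h2, h3]
    have h4 : s ^ 3 = s ^ 2 * s := by ring
    field_simp
  rw [Finset.sum_congr rfl fun i _ => key i]
  rw [Finset.sum_neg_distrib, ← Finset.sum_div, ← Finset.mul_sum]
  rw [inv_mul_eq_div]
  ring

/-- At an interior local minimum of a `C²` function the second derivative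
is positive semidefinite. -/
lemma quad_nonneg {Ω : Set (En n)} (hΩ : IsOpen Ω) {w : En n → ℝ}
    (hw : ContDiffOn ℝ 2 w Ω) {x : En n} (hx : x ∈ Ω) (hmin : IsLocalMin w x)
    (v : En n) : 0 ≤ fderiv ℝ (fderiv ℝ w) x v v := by
  set line : ℝ → En n := fun t => x + t • v with hline
  have hline0 : line 0 = x := by simp [hline]
  have hlineD : ∀ t : ℝ, HasDerivAt line v t := fun t => by
    simpa [hline] using ((hasDerivAt_id t).smul_const v).const_add x
  have hlineT : Tendsto line (nhds 0) (nhds x) := by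
    rw [← hline0]
    exact (hlineD 0).continuousAt
  have hmem : ∀ᶠ t in nhds (0:ℝ), line t ∈ Ω := hlineT.eventually (hΩ.eventually_mem hx)
  set g : ℝ → ℝ := fun t => w (line t) with hg
  have hgmin : IsLocalMin g 0 := by
    have := hlineT.eventually (hmin : ∀ᶠ y in nhds x, w x ≤ w y)
    refine this.mono fun t ht => ?_
    simpa [hg, hline0] using ht
  have hgdiff : ∀ᶠ t in nhds (0:ℝ), DifferentiableAt ℝ g t := by
    filter_upwards [hmem] with t ht
    exact (diff_at hΩ hw ht).comp t (hlineD t).differentiableAt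
  have hderiv : ∀ᶠ t in nhds (0:ℝ), deriv g t = fderiv ℝ w (line t) v := by
    filter_upwards [hmem] with t ht
    have := (diff_at hΩ hw ht).hasFDerivAt.comp_hasDerivAt t (hlineD t)
    exact this.deriv
  have hB : HasFDerivAt (fderiv ℝ w) (fderiv ℝ (fderiv ℝ w) x) (line 0) := by
    rw [hline0]; exact (diff_fderiv hΩ hw hx).hasFDerivAt
  have comp1 : HasDerivAt (fun t => fderiv ℝ w (line t)) (fderiv ℝ (fderiv ℝ w) x v) 0 :=
    hB.comp_hasDerivAt 0 (hlineD 0)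
  have hd2 : HasDerivAt (fun t => fderiv ℝ w (line t) v) (fderiv ℝ (fderiv ℝ w) x v v) 0 := by
    have := (ContinuousLinearMap.apply ℝ ℝ v).hasFDerivAt.comp_hasDerivAt 0 comp1
    exact this
  have hfinal : HasDerivAt (deriv g) (fderiv ℝ (fderiv ℝ w) x v v) 0 :=
    hd2.congr_of_eventuallyEq hderiv
  exact second_deriv_test hgmin hgdiff hfinal

lemma quad_eval (B : En n →L[ℝ] En n →L[ℝ] ℝ) (ξ : Fin n → ℝ) :
    B (∑ i, ξ i • (EuclideanSpace.single i 1 : En n))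
      (∑ j, ξ j • (EuclideanSpace.single j 1 : En n))
      = ∑ i, ∑ j, B (EuclideanSpace.single i 1) (EuclideanSpace.single j 1) * ξ i * ξ j := by
  simp only [map_sum, _root_.map_smul, ContinuousLinearMap.coe_sum', Finset.sum_apply,
    ContinuousLinearMap.coe_smul', Pi.smul_apply, smul_eq_mul, Finset.mul_sum]
  rw [Finset.sum_comm]
  refine Finset.sum_congr rfl fun i _ => Finset.sum_congr rfl fun j _ => ?_
  ring

/-- A measurable set in `Eⁿ` meeting every line in the `i`-th coordinate direction in at
most one point has measure zero. -/
lemma null_of_slices {i : Fin n} {Z : Set (En n)}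
    (hZ : MeasurableSet Z)
    (hsec : ∀ x ∈ Z, ∀ y ∈ Z, (∀ j, j ≠ i → x j = y j) → x = y) :
    volume Z = 0 := by
  classical
  set eE := (MeasurableEquiv.toLp 2 (Fin n → ℝ)).symm with heE
  have hE : MeasurePreserving eE := EuclideanSpace.volume_preserving_symm_measurableEquiv_toLp (Fin n)
  set Z₁ : Set (Fin n → ℝ) := eE.symm ⁻¹' Z with hZ₁
  have hZ₁m : MeasurableSet Z₁ := eE.symm.measurable hZ
  have h1 : volume Z₁ = volume Z := (hE.symm eE).measure_preimage hZ.nullMeasurableSet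
  set p : Fin n → Prop := fun j => j ≠ i with hp
  set eP := MeasurableEquiv.piEquivPiSubtypeProd (fun _ : Fin n => ℝ) p with heP
  have hP : MeasurePreserving eP := volume_preserving_piEquivPiSubtypeProd (fun _ : Fin n => ℝ) p
  set Z₂ := eP.symm ⁻¹' Z₁ with hZ₂
  have hZ₂m : MeasurableSet Z₂ := eP.symm.measurable hZ₁m
  have h2 : volume Z₂ = volume Z₁ := (hP.symm eP).measure_preimage hZ₁m.nullMeasurableSet
  rw [← h1, ← h2]
  have : (volume : Measure (({ j // p j } → ℝ) × ({ j // ¬ p j } → ℝ)))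
      = Measure.prod volume volume := rfl
  rw [this]
  rw [MeasureTheory.Measure.measure_prod_null hZ₂m]
  refine ae_of_all _ fun a => ?_
  show volume (Prod.mk a ⁻¹' Z₂) = 0
  have hsub : (Prod.mk a ⁻¹' Z₂).Subsingleton := by
    intro b₁ hb₁ b₂ hb₂
    have hx₁ : (eE.symm (eP.symm (a, b₁)) : En n) ∈ Z := hb₁
    have hx₂ : (eE.symm (eP.symm (a, b₂)) : En n) ∈ Z := hb₂
    have hcoord : ∀ j, j ≠ i →
        (eE.symm (eP.symm (a, b₁)) : En n) j = (eE.symm (eP.symm (a, b₂)) : En n) j := by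
      intro j hj
      have e1 : (eE.symm (eP.symm (a, b₁)) : En n) j = eP.symm (a, b₁) j := rfl
      have e2 : (eE.symm (eP.symm (a, b₂)) : En n) j = eP.symm (a, b₂) j := rfl
      rw [e1, e2]
      show (Equiv.piEquivPiSubtypeProd p (fun _ => ℝ)).symm (a, b₁) j
        = (Equiv.piEquivPiSubtypeProd p (fun _ => ℝ)).symm (a, b₂) j
      simp only [Equiv.piEquivPiSubtypeProd_symm_apply]
      rw [dif_pos (show p j from hj), dif_pos (show p j from hj)]
    have := hsec _ hx₁ _ hx₂ hcoord
    have heq : eP.symm (a, b₁) = eP.symm (a, b₂) := by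
      have : (eE.symm (eP.symm (a, b₁))) = (eE.symm (eP.symm (a, b₂))) := this
      exact eE.symm.injective this
    have := eP.symm.injective heq
    exact (Prod.mk.injEq _ _ _ _).mp this |>.2
  rcases hsub.eq_empty_or_singleton with he | ⟨f, hf⟩
  · simp [he]
  · rw [hf]
    have : ({f} : Set ({ j // ¬ p j } → ℝ)) = Set.pi univ (fun k => {f k}) := by
      ext g; simp [funext_iff]
    rw [this]
    have : (volume : Measure ({ j // ¬ p j } → ℝ)) = Measure.pi (fun _ => volume) := rfl
    rw [this, Measure.pi_pi]
    have hne : Nonempty { j // ¬ p j } := ⟨⟨i, by simp [hp]⟩⟩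
    obtain ⟨k⟩ := hne
    exact Finset.prod_eq_zero (Finset.mem_univ k) (by simp)

set_option maxHeartbeats 1000000 in
/-- **Structure at a touching point of two ordered CMC graphs with opposite mean
curvature signs**: at a touching point the gradients agree, the Hessian of `u₂ − u₁` is
positive semidefinite and nonzero with a positive pure second derivative, and near such a
point the contact set lies in the zero set of a partial derivative whose derivative does
not vanish, hence has measure zero. -/
theorem touching_point_structure
    {n : ℕ} (Ω : Set (En n)) (hΩ : IsOpen Ω) (h : ℝ) (hh : 0 < h)
    (u₁ u₂ : En n → ℝ)
    (hu₁ : ContDiffOn ℝ 2 u₁ Ω) (hu₂ : ContDiffOn ℝ 2 u₂ Ω)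
    (hle : ∀ x ∈ Ω, u₁ x ≤ u₂ x)
    (hcmc₁ : ∀ x ∈ Ω, divF u₁ x = -h)
    (hcmc₂ : ∀ x ∈ Ω, divF u₂ x = h)
    (x₀ : En n) (hx₀ : x₀ ∈ Ω) (htouch : u₁ x₀ = u₂ x₀) :
    fderiv ℝ u₁ x₀ = fderiv ℝ u₂ x₀ ∧
    (∀ ξ : Fin n → ℝ,
        0 ≤ ∑ i, ∑ j, pd2 (fun y => u₂ y - u₁ y) i j x₀ * ξ i * ξ j) ∧
    (∃ i j, pd2 (fun y => u₂ y - u₁ y) i j x₀ ≠ 0) ∧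
    (∃ i, 0 < pd2 (fun y => u₂ y - u₁ y) i i x₀) ∧
    (∃ (i : Fin n) (U : Set (En n)), IsOpen U ∧ x₀ ∈ U ∧ U ⊆ Ω ∧
      (∀ x ∈ U, 0 < pd2 (fun y => u₂ y - u₁ y) i i x) ∧
      {x ∈ U | u₁ x = u₂ x} ⊆ {x ∈ U | pd (fun y => u₂ y - u₁ y) i x = 0} ∧
      volume {x ∈ U | u₁ x = u₂ x} = 0) := by
  classical
  set w : En n → ℝ := fun y => u₂ y - u₁ y with hwdef
  have hw : ContDiffOn ℝ 2 w Ω := hu₂.sub hu₁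
  have hlocmin : ∀ x ∈ Ω, u₁ x = u₂ x → IsLocalMin w x := by
    intro x hxΩ hxeq
    have hev : ∀ᶠ y in nhds x, y ∈ Ω := hΩ.eventually_mem hxΩ
    refine hev.mono fun y hy => ?_
    show w x ≤ w y
    simp only [hwdef]
    linarith [hle y hy]
  have hmin0 : IsLocalMin w x₀ := hlocmin x₀ hx₀ htouch
  have hd1 : DifferentiableAt ℝ u₁ x₀ := diff_at hΩ hu₁ hx₀
  have hd2 : DifferentiableAt ℝ u₂ x₀ := diff_at hΩ hu₂ hx₀
  have hfdw0 : fderiv ℝ w x₀ = 0 := hmin0.fderiv_eq_zero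
  have hfdsub : fderiv ℝ w x₀ = fderiv ℝ u₂ x₀ - fderiv ℝ u₁ x₀ := fderiv_sub hd2 hd1
  have hgrad_eq : fderiv ℝ u₁ x₀ = fderiv ℝ u₂ x₀ :=
    (sub_eq_zero.mp (hfdsub.symm.trans hfdw0)).symm
  have hwB : DifferentiableAt ℝ (fderiv ℝ w) x₀ := diff_fderiv hΩ hw hx₀
  set B : En n →L[ℝ] En n →L[ℝ] ℝ := fderiv ℝ (fderiv ℝ w) x₀ with hBdef
  have hpd2 : ∀ i j, pd2 w i j x₀ = B (EuclideanSpace.single i 1) (EuclideanSpace.single j 1) :=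
    fun i j => pd2_eq w i j x₀ hwB
  -- positive semidefiniteness
  have hquad : ∀ ξ : Fin n → ℝ, 0 ≤ ∑ i, ∑ j, pd2 w i j x₀ * ξ i * ξ j := by
    intro ξ
    have h1 : ∑ i, ∑ j, pd2 w i j x₀ * ξ i * ξ j
        = B (∑ i, ξ i • (EuclideanSpace.single i 1 : En n))
            (∑ j, ξ j • (EuclideanSpace.single j 1 : En n)) := by
      rw [quad_eval]
      exact Finset.sum_congr rfl fun i _ => Finset.sum_congr rfl fun j _ => by rw [hpd2]
    rw [h1]
    exact quad_nonneg hΩ hw hx₀ hmin0 _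
  -- the PDE computation
  set q : Fin n → ℝ := fun i => pd u₁ i x₀ with hqdef
  have hpd_eq : ∀ i, pd u₂ i x₀ = q i := by
    intro i
    show fderiv ℝ u₂ x₀ (EuclideanSpace.single i 1) = q i
    rw [← hgrad_eq]
    rfl
  have hgs_eq : gradSq u₂ x₀ = gradSq u₁ x₀ := by
    unfold gradSq
    exact Finset.sum_congr rfl fun i _ => by rw [hpd_eq i]
  set s := Real.sqrt (1 + gradSq u₁ x₀) with hsdef
  have hq0 : 0 ≤ gradSq u₁ x₀ := Finset.sum_nonneg fun i _ => sq_nonneg _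
  have hs : 0 < s := Real.sqrt_pos.2 (by linarith)
  set B₁ : En n →L[ℝ] En n →L[ℝ] ℝ := fderiv ℝ (fderiv ℝ u₁) x₀ with hB₁
  set B₂ : En n →L[ℝ] En n →L[ℝ] ℝ := fderiv ℝ (fderiv ℝ u₂) x₀ with hB₂
  have hB12 : ∀ a b : En n, B a b = B₂ a b - B₁ a b := by
    have hev : fderiv ℝ w =ᶠ[nhds x₀] fun y => fderiv ℝ u₂ y - fderiv ℝ u₁ y := by
      filter_upwards [hΩ.eventually_mem hx₀] with y hy
      exact fderiv_sub (diff_at hΩ hu₂ hy) (diff_at hΩ hu₁ hy)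
    have h2 : fderiv ℝ (fderiv ℝ w) x₀
        = fderiv ℝ (fun y => fderiv ℝ u₂ y - fderiv ℝ u₁ y) x₀ := hev.fderiv_eq
    have h3 : fderiv ℝ (fun y => fderiv ℝ u₂ y - fderiv ℝ u₁ y) x₀ = B₂ - B₁ :=
      fderiv_sub (diff_fderiv hΩ hu₂ hx₀) (diff_fderiv hΩ hu₁ hx₀)
    intro a b
    rw [hBdef, h2, h3]
    simp
  have hdiv₁ := divF_eq hΩ hu₁ hx₀
  have hdiv₂ := divF_eq hΩ hu₂ hx₀
  rw [hcmc₁ x₀ hx₀] at hdiv₁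
  rw [hcmc₂ x₀ hx₀, hgs_eq] at hdiv₂
  set T := ∑ i, B (EuclideanSpace.single i 1) (EuclideanSpace.single i 1) with hT
  set P := ∑ i, ∑ j, q i * q j * B (EuclideanSpace.single i 1) (EuclideanSpace.single j 1)
    with hPdef
  have hTP : 2 * h = T / s - P / s ^ 3 := by
    have e1 : T = (∑ i, B₂ (EuclideanSpace.single i 1) (EuclideanSpace.single i 1))
        - (∑ i, B₁ (EuclideanSpace.single i 1) (EuclideanSpace.single i 1)) := by
      rw [← Finset.sum_sub_distrib]
      exact Finset.sum_congr rfl fun i _ => hB12 _ _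
    have e2 : P = (∑ i, ∑ j, pd u₂ i x₀ * pd u₂ j x₀ *
          B₂ (EuclideanSpace.single i 1) (EuclideanSpace.single j 1))
        - (∑ i, ∑ j, pd u₁ i x₀ * pd u₁ j x₀ *
          B₁ (EuclideanSpace.single i 1) (EuclideanSpace.single j 1)) := by
      rw [← Finset.sum_sub_distrib]
      refine Finset.sum_congr rfl fun i _ => ?_
      rw [← Finset.sum_sub_distrib]
      refine Finset.sum_congr rfl fun j _ => ?_
      rw [hpd_eq i, hpd_eq j, hB12]
      show q i * q j * (B₂ _ _ - B₁ _ _) = _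
      ring
    rw [e1, e2, sub_div, sub_div]
    linarith [hdiv₁, hdiv₂]
  have hP : 0 ≤ P := by
    have h0 := quad_nonneg hΩ hw hx₀ hmin0 (∑ i, q i • (EuclideanSpace.single i 1 : En n))
    have h1 : fderiv ℝ (fderiv ℝ w) x₀ (∑ i, q i • (EuclideanSpace.single i 1 : En n))
        (∑ i, q i • (EuclideanSpace.single i 1 : En n)) = P := by
      rw [← hBdef]
      rw [quad_eval B q]
      exact Finset.sum_congr rfl fun i _ => Finset.sum_congr rfl fun j _ => by ring
    rw [h1] at h0
    exact h0
  have hTge : 2 * h * s ≤ T := by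
    have h1 : 0 ≤ P / s ^ 3 := div_nonneg hP (by positivity)
    have h2 : 2 * h ≤ T / s := by linarith
    exact (le_div_iff₀ hs).mp h2
  have hTpos : 0 < T := lt_of_lt_of_le (by positivity) hTge
  have hdiag : ∃ i, 0 < pd2 w i i x₀ := by
    have hsum : ∑ _i : Fin n, (0:ℝ)
        < ∑ i, B (EuclideanSpace.single i 1) (EuclideanSpace.single i 1) := by
      simpa using hTpos
    obtain ⟨i, _, hi⟩ := Finset.exists_lt_of_sum_lt hsum
    exact ⟨i, by rw [hpd2]; exact hi⟩
  obtain ⟨i, hi⟩ := hdiag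
  refine ⟨hgrad_eq, hquad, ⟨i, i, ne_of_gt hi⟩, ⟨i, hi⟩, ?_⟩
  -- the neighborhood
  have hcont2 : ContinuousOn
      (fun x => fderiv ℝ (fderiv ℝ w) x (EuclideanSpace.single i 1)
        (EuclideanSpace.single i 1)) Ω := by
    have h1 := cont_fderiv2 hΩ hw
    have h2 : Continuous fun (L : En n →L[ℝ] En n →L[ℝ] ℝ) =>
        L (EuclideanSpace.single i 1) (EuclideanSpace.single i 1) :=
      ((ContinuousLinearMap.apply ℝ ℝ (EuclideanSpace.single i 1)).continuous).comp
        ((ContinuousLinearMap.apply ℝ (En n →L[ℝ] ℝ) (EuclideanSpace.single i 1)).continuous)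
    exact h2.comp_continuousOn h1
  have hpd2on : ∀ x ∈ Ω, pd2 w i i x
      = fderiv ℝ (fderiv ℝ w) x (EuclideanSpace.single i 1) (EuclideanSpace.single i 1) :=
    fun x hx => pd2_eq w i i x (diff_fderiv hΩ hw hx)
  set V := Ω ∩ (fun x => fderiv ℝ (fderiv ℝ w) x (EuclideanSpace.single i 1)
    (EuclideanSpace.single i 1)) ⁻¹' Ioi 0 with hVdef
  have hVopen : IsOpen V := hcont2.isOpen_inter_preimage hΩ isOpen_Ioi
  have hx₀V : x₀ ∈ V := by
    refine ⟨hx₀, ?_⟩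
    show (0:ℝ) < fderiv ℝ (fderiv ℝ w) x₀ _ _
    rw [← hpd2on x₀ hx₀]
    exact hi
  obtain ⟨r, hr, hball⟩ := Metric.isOpen_iff.mp hVopen x₀ hx₀V
  have hUΩ : ball x₀ r ⊆ Ω := fun x hx => (hball hx).1
  -- the contact set is contained in the critical set
  have hcc : {x ∈ ball x₀ r | u₁ x = u₂ x} ⊆ {x ∈ ball x₀ r | pd w i x = 0} := by
    rintro x ⟨hxU, hxe⟩
    refine ⟨hxU, ?_⟩
    have hminx := hlocmin x (hUΩ hxU) hxe
    show fderiv ℝ w x (EuclideanSpace.single i 1) = 0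
    rw [hminx.fderiv_eq_zero]
    rfl
  -- measure zero
  have hφcont : ContinuousOn (pd w i) Ω := by
    have h1 : ContinuousOn (fderiv ℝ w) Ω :=
      hw.continuousOn_fderiv_of_isOpen hΩ one_le_two
    exact ((ContinuousLinearMap.apply ℝ ℝ (EuclideanSpace.single i 1)).continuous).comp_continuousOn h1
  have hMopen : IsOpen (ball x₀ r ∩ (pd w i) ⁻¹' ({0}ᶜ)) :=
    (hφcont.mono hUΩ).isOpen_inter_preimage isOpen_ball (isOpen_compl_iff.mpr isClosed_singleton)
  have hZmeas : MeasurableSet {x ∈ ball x₀ r | pd w i x = 0} := by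
    have hZd : {x ∈ ball x₀ r | pd w i x = 0}
        = ball x₀ r \ (ball x₀ r ∩ (pd w i) ⁻¹' ({0}ᶜ)) := by
      ext x
      simp only [mem_setOf_eq, mem_diff, mem_inter_iff, mem_preimage, mem_compl_iff,
        mem_singleton_iff]
      tauto
    rw [hZd]
    exact isOpen_ball.measurableSet.diff hMopen.measurableSet
  have hslice : ∀ x ∈ {x ∈ ball x₀ r | pd w i x = 0}, ∀ y ∈ {x ∈ ball x₀ r | pd w i x = 0},
      (∀ j, j ≠ i → x j = y j) → x = y := by
    rintro x ⟨hxU, hxz⟩ y ⟨hyU, hyz⟩ hco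
    set d := y i - x i with hd
    have hyx : y = x + d • (EuclideanSpace.single i 1 : En n) := by
      refine PiLp.ext fun j => ?_
      show y j = x j + d • (EuclideanSpace.single i 1 : En n) j
      rcases eq_or_ne j i with hji | hji
      · subst hji
        simp [EuclideanSpace.single_apply, hd, smul_eq_mul]
      · rw [← hco j hji]
        simp [EuclideanSpace.single_apply, hji, smul_eq_mul]
    rcases eq_or_ne d 0 with hdz | hdz
    · rw [hyx, hdz, zero_smul, add_zero]
    · exfalso
      set γ : ℝ → En n := fun t => x + t • (d • (EuclideanSpace.single i 1 : En n)) with hγ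
      have hγ0 : γ 0 = x := by simp [hγ]
      have hγ1 : γ 1 = y := by rw [hγ]; simp [hyx]
      have hγU : ∀ t ∈ Icc (0:ℝ) 1, γ t ∈ ball x₀ r := by
        intro t ht
        have hseg : γ t ∈ segment ℝ x y := by
          rw [segment_eq_image']
          refine ⟨t, ht, ?_⟩
          have : y - x = d • (EuclideanSpace.single i 1 : En n) := by
            rw [hyx]; abel
          rw [this]
        exact (convex_ball x₀ r).segment_subset hxU hyU hseg
      set g : ℝ → ℝ := fun t => pd w i (γ t) with hgdef
      have hgD : ∀ t ∈ Icc (0:ℝ) 1, HasDerivAt g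
          (d * (fderiv ℝ (fderiv ℝ w) (γ t) (EuclideanSpace.single i 1)
            (EuclideanSpace.single i 1))) t := by
        intro t ht
        have hγd : HasDerivAt γ (d • (EuclideanSpace.single i 1 : En n)) t := by
          simpa [hγ] using ((hasDerivAt_id t).smul_const
            (d • (EuclideanSpace.single i 1 : En n))).const_add x
        have hF := hasFDerivAt_pd w i (γ t) (diff_fderiv hΩ hw (hUΩ (hγU t ht)))
        have hcomp := hF.comp_hasDerivAt t hγd
        have : ((ContinuousLinearMap.apply ℝ ℝ (EuclideanSpace.single i 1)).comp
            (fderiv ℝ (fderiv ℝ w) (γ t))) (d • (EuclideanSpace.single i 1 : En n))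
            = d * (fderiv ℝ (fderiv ℝ w) (γ t) (EuclideanSpace.single i 1)
              (EuclideanSpace.single i 1)) := by
          simp [ContinuousLinearMap.comp_apply]
        rw [this] at hcomp
        exact hcomp
      have hpos : ∀ t ∈ Icc (0:ℝ) 1,
          0 < fderiv ℝ (fderiv ℝ w) (γ t) (EuclideanSpace.single i 1)
            (EuclideanSpace.single i 1) :=
        fun t ht => (hball (hγU t ht)).2
      have hgcont : ContinuousOn g (Icc 0 1) :=
        fun t ht => ((hgD t ht).continuousAt).continuousWithinAt
      have hg0 : g 0 = 0 := by rw [hgdef]; simp only [hγ0]; exact hxz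
      have hg1 : g 1 = 0 := by rw [hgdef]; simp only [hγ1]; exact hyz
      rcases lt_or_gt_of_ne hdz with hdneg | hdpos
      · have hανti : StrictAntiOn g (Icc 0 1) := by
          apply strictAntiOn_of_deriv_neg (convex_Icc _ _) hgcont
          intro t ht
          rw [interior_Icc] at ht
          have htI : t ∈ Icc (0:ℝ) 1 := ⟨ht.1.le, ht.2.le⟩
          rw [(hgD t htI).deriv]
          exact mul_neg_of_neg_of_pos hdneg (hpos t htI)
        have := hανti (left_mem_Icc.2 zero_le_one) (right_mem_Icc.2 zero_le_one) zero_lt_one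
        rw [hg0, hg1] at this
        exact lt_irrefl 0 this
      · have hmono : StrictMonoOn g (Icc 0 1) := by
          apply strictMonoOn_of_deriv_pos (convex_Icc _ _) hgcont
          intro t ht
          rw [interior_Icc] at ht
          have htI : t ∈ Icc (0:ℝ) 1 := ⟨ht.1.le, ht.2.le⟩
          rw [(hgD t htI).deriv]
          exact mul_pos hdpos (hpos t htI)
        have := hmono (left_mem_Icc.2 zero_le_one) (right_mem_Icc.2 zero_le_one) zero_lt_one
        rw [hg0, hg1] at this
        exact lt_irrefl 0 this
  have hZnull : volume {x ∈ ball x₀ r | pd w i x = 0} = 0 :=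
    null_of_slices hZmeas hslice
  refine ⟨i, ball x₀ r, isOpen_ball, mem_ball_self hr, hUΩ, ?_, hcc, ?_⟩
  · intro x hx
    rw [hpd2on x (hUΩ hx)]
    exact (hball hx).2
  · exact measure_mono_null hcc hZnull
end
end
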